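/- arXiv:0905.4647 — 6 statements merged into one kernel-verified Lean document; each statement's English description precedes it below -/
import Mathlib

section
/- Let A be a finitely generated integral domain over ℂ. Then A admits a nonzero locally nilpotent ℂ-derivation if and only if there exist a nonzero element f ∈ A and a commutative ℂ-algebra B such that the localization A_f = A[1/f] is isomorphic as a ℂ-algebra to the polynomial ring B[X] in one variable over B. -/
set_option synthInstance.maxHeartbeats 1000000
set_option maxHeartbeats 4000000
open Polynomial

noncomputable def Derivation.conj {R A P : Type*} [CommRing R] [CommRing A] [CommRing P]
    [Algebra R A] [Algebra R P] (e : A ≃ₐ[R] P) (d : Derivation R P P) : Derivation R A A where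
  toLinearMap := e.symm.toLinearMap.comp (d.toLinearMap.comp e.toLinearMap)
  map_one_eq_zero' := by simp
  leibniz' a b := by
    show e.symm (d (e (a * b))) = a • e.symm (d (e b)) + b • e.symm (d (e a))
    rw [map_mul, d.leibniz, map_add, smul_eq_mul, smul_eq_mul, map_mul, map_mul,
      AlgEquiv.symm_apply_apply, AlgEquiv.symm_apply_apply, smul_eq_mul, smul_eq_mul]

@[simp] lemma Derivation.conj_apply {R A P : Type*} [CommRing R] [CommRing A] [CommRing P]
    [Algebra R A] [Algebra R P] (e : A ≃ₐ[R] P) (d : Derivation R P P) (x : A) :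
    Derivation.conj e d x = e.symm (d (e x)) := rfl

lemma Derivation.conj_iterate {R A P : Type*} [CommRing R] [CommRing A] [CommRing P]
    [Algebra R A] [Algebra R P] (e : A ≃ₐ[R] P) (d : Derivation R P P) (n : ℕ) (x : A) :
    (⇑(Derivation.conj e d))^[n] x = e.symm ((⇑d)^[n] (e x)) := by
  induction n generalizing x with
  | zero => simp
  | succ n ih =>
      rw [Function.iterate_succ_apply, Function.iterate_succ_apply, ih, conj_apply,
        AlgEquiv.apply_symm_apply]

lemma Derivation.mul_right_iterate {R S : Type*} [CommRing R] [CommRing S] [Algebra R S]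
    (D : Derivation R S S) {c : S} (hc : D c = 0) (n : ℕ) (y : S) :
    (⇑D)^[n] (y * c) = (⇑D)^[n] y * c := by
  induction n generalizing y with
  | zero => rfl
  | succ n ih =>
      rw [Function.iterate_succ_apply, Function.iterate_succ_apply, D.leibniz, hc, smul_zero, zero_add,
        smul_eq_mul, mul_comm c, ih]

lemma Derivation.map_units_inv {R S : Type*} [CommRing R] [CommRing S] [Algebra R S]
    (D : Derivation R S S) (u : Sˣ) (hu : D (u : S) = 0) : D ((u⁻¹ : Sˣ) : S) = 0 := by
  have h : D ((u : S) * ((u⁻¹ : Sˣ) : S)) = 0 := by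
    rw [Units.mul_inv, D.map_one_eq_zero]
  rw [D.leibniz, hu, smul_zero, add_zero, smul_eq_mul] at h
  calc D ((u⁻¹ : Sˣ) : S) = ((u⁻¹ : Sˣ) : S) * ((u : S) * D ((u⁻¹ : Sˣ) : S)) := by
        rw [← mul_assoc, Units.inv_mul, one_mul]
    _ = 0 := by rw [h, mul_zero]

theorem der_of_cylindrical (A : Type) [CommRing A] [IsDomain A] [Algebra ℂ A]
    [Algebra.FiniteType ℂ A] (f : A) (hf : f ≠ 0) (B : Type) [CommRing B] [Algebra ℂ B]
    (e : Localization.Away f ≃ₐ[ℂ] Polynomial B) :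
    ∃ D : Derivation ℂ A A, D ≠ 0 ∧ ∀ a : A, ∃ n : ℕ, (⇑D)^[n] a = 0 := by
  classical
  set R := Localization.Away f with hR
  have hle : Submonoid.powers f ≤ nonZeroDivisors A := by
    rintro x ⟨n, rfl⟩
    exact mem_nonZeroDivisors_of_ne_zero (pow_ne_zero _ hf)
  haveI hdom : IsDomain R := IsLocalization.isDomain_localization hle
  set φ : A →+* R := algebraMap A R with hφ
  have hinj : Function.Injective φ := IsLocalization.injective R hle
  set δ : Derivation ℂ (Polynomial B) (Polynomial B) := (Polynomial.derivative').restrictScalars ℂ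
    with hδ
  have hδ_apply : ∀ p : Polynomial B, δ p = derivative p := fun p => rfl
  set D₀ : Derivation ℂ R R := Derivation.conj e δ with hD₀
  have hD₀_apply : ∀ z : R, D₀ z = e.symm (δ (e z)) := fun z => rfl
  have hfu : IsUnit (φ f) := IsLocalization.map_units R (⟨f, Submonoid.mem_powers f⟩ :
    Submonoid.powers f)
  haveI hBX : NoZeroDivisors (Polynomial B) :=
    Function.Injective.noZeroDivisors (e.symm : Polynomial B →+* R) e.symm.injective
      (map_zero _) (map_mul _)
  haveI hB : NoZeroDivisors B :=
    Function.Injective.noZeroDivisors (Polynomial.C : B →+* Polynomial B) Polynomial.C_injective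
      (map_zero _) (map_mul _)
  have hD₀f : D₀ (φ f) = 0 := by
    have hu : IsUnit (e (φ f)) := hfu.map e
    have h2 : derivative (e (φ f)) = 0 := by
      rw [Polynomial.eq_C_of_natDegree_eq_zero (Polynomial.natDegree_eq_zero_of_isUnit hu)]
      simp
    rw [hD₀_apply, hδ_apply, h2, map_zero]
  have hD₀nil : ∀ z : R, ∃ n, (⇑D₀)^[n] z = 0 := by
    intro z
    refine ⟨(e z).natDegree + 1, ?_⟩
    rw [Derivation.conj_iterate e δ ((e z).natDegree + 1) z]
    have hd : ∀ (k : ℕ) (p : Polynomial B), (⇑δ)^[k] p = derivative^[k] p := by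
      intro k
      induction k with
      | zero => intro p; rfl
      | succ k ih => intro p; rw [Function.iterate_succ_apply, Function.iterate_succ_apply, ih,
          hδ_apply]
    rw [hd, Polynomial.iterate_derivative_eq_zero (Nat.lt_succ_self _), map_zero]
  obtain ⟨s, hs⟩ := Algebra.FiniteType.out (R := ℂ) (A := A)
  have hclear : ∀ x : A, ∃ n : ℕ, ∃ y : A, φ y = φ (f ^ n) * D₀ (φ x) := by
    intro x
    obtain ⟨⟨a, m⟩, hm⟩ := IsLocalization.surj (Submonoid.powers f) (D₀ (φ x))
    obtain ⟨n, hn⟩ := m.2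
    exact ⟨n, a, by rw [← hm]; simp only [hn]; ring⟩
  choose nn yy hyy using hclear
  set N : ℕ := s.sup nn with hN
  have hφsmul : ∀ (c : ℂ) (x : A), φ (c • x) = c • φ x := fun c x => by
    rw [Algebra.smul_def, map_mul, ← IsScalarTower.algebraMap_apply, ← Algebra.smul_def]
  let T : Subalgebra ℂ A :=
    { carrier := {x : A | ∃ y : A, φ y = φ (f ^ N) * D₀ (φ x)}
      mul_mem' := by
        rintro x y ⟨u, hu⟩ ⟨v, hv⟩
        refine ⟨x * v + y * u, ?_⟩
        rw [map_add, map_mul, map_mul, hu, hv, map_mul, D₀.leibniz]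
        simp only [smul_eq_mul]
        ring
      one_mem' := ⟨0, by simp⟩
      add_mem' := by
        rintro x y ⟨u, hu⟩ ⟨v, hv⟩
        refine ⟨u + v, ?_⟩
        simp only [map_add, Derivation.map_add, hu, hv, mul_add]
      zero_mem' := ⟨0, by simp⟩
      algebraMap_mem' := fun c => ⟨0, by
        rw [map_zero, ← IsScalarTower.algebraMap_apply, D₀.map_algebraMap, mul_zero]⟩ }
  have key : ∀ x : A, ∃ y : A, φ y = φ (f ^ N) * D₀ (φ x) := by
    intro x
    have hsub : (s : Set A) ⊆ T := by
      intro z hz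
      have hxle : nn z ≤ N := Finset.le_sup hz
      refine ⟨f ^ (N - nn z) * yy z, ?_⟩
      rw [map_mul, hyy, ← mul_assoc, ← map_mul, ← pow_add, Nat.sub_add_cancel hxle]
    have hT : Algebra.adjoin ℂ (s : Set A) ≤ T := Algebra.adjoin_le hsub
    rw [hs] at hT
    exact hT (Algebra.mem_top)
  choose Dfun hDfun using key
  let Dlin : A →ₗ[ℂ] A :=
    { toFun := Dfun
      map_add' := fun x y => hinj (by
        simp only [hDfun, map_add, Derivation.map_add, mul_add])
      map_smul' := fun c x => hinj (by
        rw [hDfun, hφsmul, Derivation.map_smul, RingHom.id_apply, hφsmul, hDfun,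
          mul_smul_comm]) }
  let D : Derivation ℂ A A :=
    { toLinearMap := Dlin
      map_one_eq_zero' := hinj (by
        show φ (Dfun 1) = φ 0
        rw [hDfun, map_one, D₀.map_one_eq_zero, mul_zero, map_zero])
      leibniz' := fun x y => hinj (by
        show φ (Dfun (x * y)) = φ (x • Dfun y + y • Dfun x)
        simp only [smul_eq_mul, map_add, map_mul, hDfun, Derivation.leibniz]
        ring) }
  have hDapp : ∀ x : A, D x = Dfun x := fun x => rfl
  have hφfN : D₀ (φ (f ^ N)) = 0 := by
    rw [map_pow, D₀.leibniz_pow, hD₀f, smul_zero]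
    exact nsmul_zero _
  have hIter : ∀ (n : ℕ) (x : A), φ ((⇑D)^[n] x) = φ (f ^ N) ^ n * (⇑D₀)^[n] (φ x) := by
    intro n
    induction n with
    | zero => intro x; simp
    | succ n ih =>
        intro x
        have hc : D₀ (φ (f ^ N) ^ n) = 0 := by
          rw [D₀.leibniz_pow, hφfN, smul_zero]
          exact nsmul_zero _
        rw [Function.iterate_succ_apply', Function.iterate_succ_apply', hDapp, hDfun, ih,
          D₀.leibniz, hc, smul_zero, add_zero, smul_eq_mul, pow_succ]
        ring
  refine ⟨D, ?_, ?_⟩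
  · intro h0
    have hDfun0 : ∀ x : A, Dfun x = 0 := by
      intro x
      have : D x = 0 := by rw [h0]; rfl
      rwa [hDapp] at this
    have hφfN_ne : φ (f ^ N) ≠ 0 := fun h => (pow_ne_zero N hf) (hinj (by rw [h, map_zero]))
    have h1 : ∀ x : A, D₀ (φ x) = 0 := by
      intro x
      have h2 : φ (f ^ N) * D₀ (φ x) = 0 := by rw [← hDfun, hDfun0, map_zero]
      rcases mul_eq_zero.1 h2 with h | h
      · exact absurd h hφfN_ne
      · exact h
    have h2 : ∀ z : R, D₀ z = 0 := by
      intro z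
      obtain ⟨⟨a, m⟩, hm⟩ := IsLocalization.surj (Submonoid.powers f) z
      obtain ⟨k, hk⟩ := m.2
      have hk' : f ^ k = (m : A) := hk
      have hm' : z * φ (f ^ k) = φ a := by rw [hk']; exact hm
      have h3 : D₀ (z * φ (f ^ k)) = 0 := by rw [hm']; exact h1 a
      rw [D₀.leibniz, h1, smul_zero, zero_add, smul_eq_mul] at h3
      have hfk_ne : φ (f ^ k) ≠ 0 := fun h => (pow_ne_zero k hf) (hinj (by rw [h, map_zero]))
      rcases mul_eq_zero.1 h3 with h | h
      · exact absurd h hfk_ne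
      · exact h
    have h4 : (1 : Polynomial B) = 0 := by
      have h5 : D₀ (e.symm Polynomial.X) = 0 := h2 _
      rw [hD₀_apply, AlgEquiv.apply_symm_apply, hδ_apply, Polynomial.derivative_X] at h5
      have h6 := congrArg e h5
      rwa [AlgEquiv.apply_symm_apply, map_zero] at h6
    exact one_ne_zero (by calc (1 : R) = e.symm 1 := (map_one e.symm).symm
      _ = e.symm 0 := by rw [h4]
      _ = 0 := map_zero _)
  · intro x
    obtain ⟨n, hn⟩ := hD₀nil (φ x)
    refine ⟨n, hinj ?_⟩
    rw [map_zero, hIter, hn, mul_zero]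

lemma Derivation.mul_right_iterate' {R S : Type*} [CommRing R] [CommRing S] [Algebra R S]
    (D : Derivation R S S) {c : S} (hc : D c = 0) (n : ℕ) (y : S) :
    (⇑D)^[n] (y * c) = (⇑D)^[n] y * c := by
  induction n generalizing y with
  | zero => rfl
  | succ n ih =>
      rw [Function.iterate_succ_apply, Function.iterate_succ_apply, D.leibniz, hc, smul_zero,
        zero_add, smul_eq_mul, mul_comm c, ih]

lemma Derivation.map_units_inv' {R S : Type*} [CommRing R] [CommRing S] [Algebra R S]
    (D : Derivation R S S) (u : Sˣ) (hu : D (u : S) = 0) : D ((u⁻¹ : Sˣ) : S) = 0 := by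
  have h : D ((u : S) * ((u⁻¹ : Sˣ) : S)) = 0 := by
    rw [Units.mul_inv, D.map_one_eq_zero]
  rw [D.leibniz, hu, smul_zero, add_zero, smul_eq_mul] at h
  calc D ((u⁻¹ : Sˣ) : S) = ((u⁻¹ : Sˣ) : S) * ((u : S) * D ((u⁻¹ : Sˣ) : S)) := by
        rw [← mul_assoc, Units.inv_mul, one_mul]
    _ = 0 := by rw [h, mul_zero]

lemma exists_antideriv {B : Type*} [CommRing B] [Algebra ℂ B] (p : Polynomial B) :
    ∃ P : Polynomial B, derivative P = p := by
  refine ⟨p.sum fun n b => C (((n : ℂ) + 1)⁻¹ • b) * X ^ (n + 1), ?_⟩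
  rw [Polynomial.sum_def, map_sum]
  have h : ∀ n ∈ p.support, derivative (C (((n : ℂ) + 1)⁻¹ • (p.coeff n)) * X ^ (n + 1))
      = C (p.coeff n) * X ^ n := by
    intro n _
    rw [derivative_C_mul_X_pow, Nat.add_sub_cancel]
    congr 1
    rw [← map_natCast (algebraMap ℂ B) (n + 1), mul_comm, ← Algebra.smul_def, smul_smul]
    have hne : ((n : ℂ) + 1) ≠ 0 := Nat.cast_add_one_ne_zero n
    rw [show (((n + 1 : ℕ) : ℂ)) = (n : ℂ) + 1 by push_cast; ring, mul_inv_cancel₀ hne, one_smul]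
  rw [Finset.sum_congr rfl h]
  exact Polynomial.sum_C_mul_X_pow_eq p

lemma exists_extension (A : Type) [CommRing A] [Algebra ℂ A] (f : A)
    (D : Derivation ℂ A A) (hDf : D f = 0) :
    ∃ D' : Derivation ℂ (Localization.Away f) (Localization.Away f),
      ∀ y : A, D' (algebraMap A (Localization.Away f) y) =
        algebraMap A (Localization.Away f) (D y) := by
  classical
  set R := Localization.Away f with hR
  set φ : A →+* R := algebraMap A R with hφ
  set ψ : A →+* TrivSqZeroExt R R :=
    { toFun := fun y => (φ y, φ (D y))
      map_one' := by
        refine TrivSqZeroExt.ext ?_ ?_ <;>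
          simp [TrivSqZeroExt.fst_mk, TrivSqZeroExt.snd_mk]
      map_mul' := fun y z => by
        refine TrivSqZeroExt.ext ?_ ?_
        · erw [TrivSqZeroExt.fst_mul]
          simp [TrivSqZeroExt.fst_mk]
        · erw [TrivSqZeroExt.snd_mul]
          simp only [TrivSqZeroExt.fst_mk, TrivSqZeroExt.snd_mk, smul_eq_mul,
            MulOpposite.smul_eq_mul_unop, MulOpposite.unop_op, Derivation.leibniz, map_add,
            map_mul]
          ring
      map_zero' := by
        refine TrivSqZeroExt.ext ?_ ?_ <;>
          simp [TrivSqZeroExt.fst_mk, TrivSqZeroExt.snd_mk]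
      map_add' := fun y z => by
        refine TrivSqZeroExt.ext ?_ ?_ <;>
          simp [TrivSqZeroExt.fst_mk, TrivSqZeroExt.snd_mk, TrivSqZeroExt.fst_add,
            TrivSqZeroExt.snd_add, Derivation.map_add] <;> rfl } with hψ
  have hψ_apply : ∀ y : A, ψ y = (φ y, φ (D y)) := fun y => rfl
  have hψf : ψ f = TrivSqZeroExt.inl (φ f) := by
    refine TrivSqZeroExt.ext ?_ ?_
    · rw [TrivSqZeroExt.fst_inl]; rfl
    · rw [TrivSqZeroExt.snd_inl]
      show φ (D f) = 0
      rw [hDf, map_zero]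
  have hfu : IsUnit (φ f) := IsLocalization.map_units R (⟨f, Submonoid.mem_powers f⟩ :
    Submonoid.powers f)
  have hunit : ∀ y : Submonoid.powers f, IsUnit (ψ (y : A)) := by
    rintro ⟨y, k, rfl⟩
    show IsUnit (ψ (f ^ k))
    rw [map_pow, hψf]
    exact (TrivSqZeroExt.isUnit_inl_iff.mpr hfu).pow k
  set Ψ : R →+* TrivSqZeroExt R R :=
    IsLocalization.lift (M := Submonoid.powers f) (S := R) hunit with hΨ
  have hΨφ : ∀ y : A, Ψ (φ y) = ψ y := fun y =>
    IsLocalization.lift_eq hunit y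
  set fstRH : TrivSqZeroExt R R →+* R :=
    { toFun := TrivSqZeroExt.fst
      map_one' := TrivSqZeroExt.fst_one (R := R) (M := R)
      map_mul' := TrivSqZeroExt.fst_mul
      map_zero' := TrivSqZeroExt.fst_zero (R := R) (M := R)
      map_add' := TrivSqZeroExt.fst_add } with hfstRH
  have hfst : ∀ z : R, (Ψ z).fst = z := by
    have hcomp : fstRH.comp Ψ = RingHom.id R := by
      apply IsLocalization.ringHom_ext (Submonoid.powers f)
      ext y
      show fstRH (Ψ (φ y)) = φ y
      rw [hΨφ]
      rfl
    intro z
    exact congrArg (fun (g : R →+* R) => g z) hcomp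
  have hψalg : ∀ c : ℂ, Ψ (algebraMap ℂ R c) = ((algebraMap ℂ R c, 0) : TrivSqZeroExt R R) := by
    intro c
    rw [IsScalarTower.algebraMap_apply ℂ A R, hΨφ, hψ_apply, D.map_algebraMap, map_zero,
      ← IsScalarTower.algebraMap_apply ℂ A R]
  set D'fun : R → R := fun z => (Ψ z).snd with hD'fun
  have hD'mul : ∀ y z : R, D'fun (y * z) = y * D'fun z + z * D'fun y := by
    intro y z
    show (Ψ (y * z)).snd = y * (Ψ z).snd + z * (Ψ y).snd
    rw [map_mul, TrivSqZeroExt.snd_mul]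
    simp only [smul_eq_mul, MulOpposite.smul_eq_mul_unop, MulOpposite.unop_op, hfst]
    ring
  refine ⟨{ toFun := D'fun
            map_add' := fun y z => by
              show (Ψ (y + z)).snd = (Ψ y).snd + (Ψ z).snd
              rw [map_add, TrivSqZeroExt.snd_add]
            map_smul' := fun c z => by
              show (Ψ (c • z)).snd = (RingHom.id ℂ) c • (Ψ z).snd
              rw [Algebra.smul_def, map_mul, TrivSqZeroExt.snd_mul, hψalg]
              simp only [TrivSqZeroExt.fst_mk, TrivSqZeroExt.snd_mk, smul_eq_mul,
                MulOpposite.smul_eq_mul_unop, MulOpposite.unop_op, mul_zero, zero_mul, add_zero,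
                RingHom.id_apply]
              rw [← Algebra.smul_def]
            map_one_eq_zero' := by
              show (Ψ 1).snd = 0
              rw [map_one, TrivSqZeroExt.snd_one]
            leibniz' := fun y z => by
              show D'fun (y * z) = y • D'fun z + z • D'fun y
              rw [hD'mul, smul_eq_mul, smul_eq_mul] }, ?_⟩
  intro y
  show (Ψ (φ y)).snd = φ (D y)
  rw [hΨφ, hψ_apply]
  exact TrivSqZeroExt.snd_mk _ _

theorem cylindrical_of_der (A : Type) [CommRing A] [IsDomain A] [Algebra ℂ A]
    [Algebra.FiniteType ℂ A] (D : Derivation ℂ A A) (hD : D ≠ 0)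
    (hnil : ∀ a : A, ∃ n : ℕ, (⇑D)^[n] a = 0) :
    ∃ f : A, f ≠ 0 ∧ ∃ (B : Type) (_ : CommRing B) (_ : Algebra ℂ B),
      Nonempty (Localization.Away f ≃ₐ[ℂ] Polynomial B) := by
  classical
  -- Step 1 : find `a` with `D a ≠ 0` and `D (D a) = 0`
  have hx : ∃ x : A, D x ≠ 0 := by
    by_contra h
    push_neg at h
    exact hD (by ext z; simp [h z])
  obtain ⟨x, hxne⟩ := hx
  have hex : ∃ n : ℕ, (⇑D)^[n] x = 0 := hnil x
  set n := Nat.find hex with hn_def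
  have hn : (⇑D)^[n] x = 0 := Nat.find_spec hex
  have hlt : ∀ k, k < n → (⇑D)^[k] x ≠ 0 := fun k hk => Nat.find_min hex hk
  have hD0iter : ∀ k : ℕ, (⇑D)^[k] (0 : A) = 0 := by
    intro k
    induction k with
    | zero => rfl
    | succ k ih => rw [Function.iterate_succ_apply', ih, Derivation.map_zero]
  have h1n : 1 < n := by
    by_contra h
    push_neg at h
    have h2 : (⇑D)^[1] x = 0 := by
      have h3 : (⇑D)^[1] x = (⇑D)^[(1 - n) + n] x := by congr 1; omega
      rw [h3, Function.iterate_add_apply, hn, hD0iter]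
    simp only [Function.iterate_one] at h2
    exact hxne h2
  set a : A := (⇑D)^[n - 2] x with ha_def
  have hDa : D a = (⇑D)^[n - 1] x := by
    show D ((⇑D)^[n - 2] x) = (⇑D)^[n - 1] x
    rw [← Function.iterate_succ_apply' D (n - 2) x]
    congr 1
    omega
  have hDane : D a ≠ 0 := by rw [hDa]; exact hlt _ (by omega)
  have hDDa : D (D a) = 0 := by
    rw [hDa, ← Function.iterate_succ_apply' D (n - 1) x]
    have h4 : (n - 1).succ = n := by omega
    rw [h4]
    exact hn
  set f : A := D a with hf_def
  have hf : f ≠ 0 := hDane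
  have hDf : D f = 0 := hDDa
  clear_value f
  clear hDane hDDa hDa
  clear_value a
  clear ha_def
  clear_value n
  -- Step 2 : the localization
  set R := Localization.Away f with hR
  have hle : Submonoid.powers f ≤ nonZeroDivisors A := by
    rintro y ⟨k, rfl⟩
    exact mem_nonZeroDivisors_of_ne_zero (pow_ne_zero _ hf)
  haveI hdom : IsDomain R := IsLocalization.isDomain_localization hle
  set φ : A →+* R := algebraMap A R with hφ
  have hinj : Function.Injective φ := IsLocalization.injective R hle
  have hfuk : ∀ k : ℕ, IsUnit (φ (f ^ k)) := by
    intro k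
    exact IsLocalization.map_units R (⟨f ^ k, ⟨k, rfl⟩⟩ : Submonoid.powers f)
  have hfu : IsUnit (φ f) := IsLocalization.map_units R (⟨f, Submonoid.mem_powers f⟩ :
    Submonoid.powers f)
  -- Step 3 : extend `D` to `R`
  obtain ⟨D', hcomm⟩ := exists_extension A f D hDf
  have hIt : ∀ (k : ℕ) (y : A), (⇑D')^[k] (φ y) = φ ((⇑D)^[k] y) := by
    intro k
    induction k with
    | zero => intro y; rfl
    | succ k ih =>
        intro y
        rw [Function.iterate_succ_apply', Function.iterate_succ_apply', ih, hcomm]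
  have hD'f : D' (φ f) = 0 := by rw [hcomm, hDf, map_zero]
  have hD'fk : ∀ k : ℕ, D' (φ (f ^ k)) = 0 := by
    intro k
    rw [map_pow, Derivation.leibniz_pow, hD'f, smul_zero]
    exact nsmul_zero _
  -- Step 4 : local nilpotency of D'
  have hD'nil : ∀ z : R, ∃ k : ℕ, (⇑D')^[k] z = 0 := by
    intro z
    obtain ⟨⟨y, m⟩, hm⟩ := IsLocalization.surj (Submonoid.powers f) z
    obtain ⟨k, hk⟩ := m.2
    have hk' : f ^ k = (m : A) := hk
    have hm' : z * φ (f ^ k) = φ y := by rw [hk']; exact hm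
    have hu := hfuk k
    have huc : ((hu.unit : Rˣ) : R) = φ (f ^ k) := hu.unit_spec
    have hv : D' (((hu.unit⁻¹ : Rˣ) : R)) = 0 := by
      refine Derivation.map_units_inv' D' hu.unit ?_
      rw [huc]
      exact hD'fk k
    have hz : z = φ y * ((hu.unit⁻¹ : Rˣ) : R) := by
      calc z = z * (((hu.unit : Rˣ) : R) * ((hu.unit⁻¹ : Rˣ) : R)) := by
              rw [Units.mul_inv, mul_one]
        _ = (z * ((hu.unit : Rˣ) : R)) * ((hu.unit⁻¹ : Rˣ) : R) := by ring
        _ = φ y * ((hu.unit⁻¹ : Rˣ) : R) := by rw [huc, hm']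
    obtain ⟨k', hk'2⟩ := hnil y
    refine ⟨k', ?_⟩
    rw [hz, Derivation.mul_right_iterate' D' hv, hIt, hk'2, map_zero, zero_mul]
  -- Step 5 : the slice
  have huac : ((hfu.unit : Rˣ) : R) = φ f := hfu.unit_spec
  set v : R := ((hfu.unit⁻¹ : Rˣ) : R) with hv_def
  have hDv : D' v = 0 := by
    refine Derivation.map_units_inv' D' hfu.unit ?_
    rw [huac]
    exact hD'f
  set s₀ : R := φ a * v with hs₀_def
  have hslice : D' s₀ = 1 := by
    rw [hs₀_def]
    rw [D'.leibniz, hDv, smul_zero, zero_add, smul_eq_mul, hcomm]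
    have h5 : φ (D a) = ((hfu.unit : Rˣ) : R) := by rw [← hf_def, huac]
    rw [h5]
    exact Units.inv_mul _
  clear_value s₀
  clear hs₀_def
  -- Step 6 : the kernel subalgebra
  set B : Subalgebra ℂ R :=
    { carrier := {z : R | D' z = 0}
      mul_mem' := by
        intro y z hy hz
        show D' (y * z) = 0
        rw [D'.leibniz, hy, hz, smul_zero, smul_zero, add_zero]
      one_mem' := D'.map_one_eq_zero
      add_mem' := by
        intro y z hy hz
        show D' (y + z) = 0
        rw [Derivation.map_add, hy, hz, add_zero]
      zero_mem' := D'.map_zero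
      algebraMap_mem' := fun c => D'.map_algebraMap c } with hB
  have halgB : ∀ b : ↥B, (algebraMap ↥B R) b = (b : R) := fun b => rfl
  set Φ : Polynomial ↥B →ₐ[ℂ] R := (Polynomial.aeval (R := ↥B) s₀).restrictScalars ℂ with hΦdef
  have hΦ : ∀ p : Polynomial ↥B, Φ p = aeval s₀ p := fun p => rfl
  have L1 : ∀ p : Polynomial ↥B, D' (aeval s₀ p) = aeval s₀ (derivative p) := by
    intro p
    induction p using Polynomial.induction_on' with
    | add p q hp hq =>
        rw [map_add, Derivation.map_add, hp, hq, map_add, map_add]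
    | monomial k b =>
        rw [aeval_monomial, derivative_monomial, aeval_monomial, D'.leibniz,
          Derivation.leibniz_pow, hslice]
        have hbb : D' ((algebraMap ↥B R) b) = 0 := b.2
        rw [hbb, smul_zero, add_zero]
        simp only [smul_eq_mul, nsmul_eq_mul, mul_one, map_mul, map_natCast]
        ring
  haveI hCZ : CharZero ↥B := by
    have halg : Function.Injective (algebraMap ℂ R) := RingHom.injective _
    have h2 : Function.Injective (algebraMap ℂ ↥B) := by
      intro c d hcd
      apply halg
      have h3 := congrArg (Subtype.val) hcd
      simpa [Subalgebra.algebraMap_eq] using h3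
    exact charZero_of_injective_algebraMap h2
  have hinjΦ : Function.Injective Φ := by
    rw [injective_iff_map_eq_zero]
    intro p hp
    rw [hΦ] at hp
    have main : ∀ (k : ℕ) (q : Polynomial ↥B), q.natDegree ≤ k → aeval s₀ q = 0 → q = 0 := by
      intro k
      induction k with
      | zero =>
          intro q hq h0
          rw [Polynomial.eq_C_of_natDegree_le_zero hq] at h0 ⊢
          rw [aeval_C, halgB] at h0
          have h6 : q.coeff 0 = 0 := Subtype.ext h0
          rw [h6, map_zero]
      | succ k ih =>
          intro q hq h0
          have hd : aeval s₀ (derivative q) = 0 := by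
            rw [← L1, h0, D'.map_zero]
          have hdd : (derivative q).natDegree ≤ k := by
            have h7 := Polynomial.natDegree_derivative_le q
            omega
          have h2 : derivative q = 0 := ih (derivative q) hdd hd
          have h3 : q.natDegree = 0 := natDegree_eq_zero_of_derivative_eq_zero h2
          exact ih q (by omega) h0
    exact main p.natDegree p le_rfl hp
  have hsurjΦ : Function.Surjective Φ := by
    have main : ∀ (k : ℕ) (z : R), (⇑D')^[k] z = 0 → ∃ p : Polynomial ↥B, aeval s₀ p = z := by
      intro k
      induction k with
      | zero =>
          intro z h0
          exact ⟨0, by rw [map_zero]; exact h0.symm⟩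
      | succ k ih =>
          intro z h0
          have h1 : (⇑D')^[k] (D' z) = 0 := by
            rw [← Function.iterate_succ_apply]
            exact h0
          obtain ⟨p, hp⟩ := ih (D' z) h1
          obtain ⟨P, hP⟩ := exists_antideriv p
          have h2 : D' (z - aeval s₀ P) = 0 := by
            rw [Derivation.map_sub, L1, hP, hp, sub_self]
          refine ⟨P + Polynomial.C (⟨z - aeval s₀ P, h2⟩ : ↥B), ?_⟩
          rw [map_add, aeval_C, halgB]
          show aeval s₀ P + (z - aeval s₀ P) = z
          ring
    intro z
    obtain ⟨k, hk⟩ := hD'nil z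
    obtain ⟨p, hp⟩ := main k z hk
    exact ⟨p, hp⟩
  exact ⟨f, hf, ↥B, inferInstance, inferInstance,
    ⟨(AlgEquiv.ofBijective Φ ⟨hinjΦ, hsurjΦ⟩).symm⟩⟩


/-- Proposition 3.5. Let `A` be a finitely generated integral domain over
`ℂ`. Then `A` admits a nonzero locally nilpotent ℂ-derivation if and only if there exist a
nonzero element `f ∈ A` and a commutative ℂ-algebra `B` such that the localization
`A_f = A[1/f]` is isomorphic as a ℂ-algebra to the polynomial ring `B[X]` in one variable
over `B` (i.e. `Spec A` contains a dense principal open subset which is a cylinder). -/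
theorem exists_locallyNilpotentDerivation_iff_cylindrical
    (A : Type) [CommRing A] [IsDomain A] [Algebra ℂ A] [Algebra.FiniteType ℂ A] :
    (∃ D : Derivation ℂ A A, D ≠ 0 ∧ ∀ a : A, ∃ n : ℕ, (⇑D)^[n] a = 0) ↔
      ∃ f : A, f ≠ 0 ∧ ∃ (B : Type) (_ : CommRing B) (_ : Algebra ℂ B),
        Nonempty (Localization.Away f ≃ₐ[ℂ] Polynomial B) := by
  constructor
  · rintro ⟨D, hD, hnil⟩
    exact cylindrical_of_der A D hD hnil
  · rintro ⟨f, hf, B, _, _, ⟨e⟩⟩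
    exact der_of_cylindrical A f hf B e
end

section
/- Let A be an integral domain that is a commutative ℂ-algebra, let ∂ be a nonzero locally nilpotent ℂ-derivation of A, and set B = ker ∂. Then there exist g, h ∈ A with ∂g = h, ∂h = 0 and h ≠ 0, such that the ℂ-algebra homomorphism Φ : B_h[X] → A_h from the polynomial ring in one variable over the localization B_h to the localization A_h, which extends the canonical map B_h → A_h and sends X to g/h, is an isomorphism; moreover, under Φ the canonical extension of ∂ to A_h corresponds to the derivation d/dX of B_h[X]. -/
open Polynomial

/-- The kernel `B = ker ∂` of a ℂ-derivation `∂ : A → A`, as a ℂ-subalgebra of `A`. -/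
def Derivation.kerSubalgebra {A : Type} [CommRing A] [Algebra ℂ A]
    (D : Derivation ℂ A A) : Subalgebra ℂ A where
  carrier := {a | D a = 0}
  mul_mem' := by
    intro a b ha hb
    simp only [Set.mem_setOf_eq] at *
    rw [D.leibniz, ha, hb, smul_zero, smul_zero, add_zero]
  one_mem' := by
    simp only [Set.mem_setOf_eq, Derivation.map_one_eq_zero]
  add_mem' := by
    intro a b ha hb
    simp only [Set.mem_setOf_eq] at *
    rw [map_add, ha, hb, add_zero]
  zero_mem' := by simp only [Set.mem_setOf_eq, map_zero]
  algebraMap_mem' := by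
    intro r
    simp only [Set.mem_setOf_eq, Derivation.map_algebraMap]

section aux
open Polynomial Finset

variable {A : Type} [CommRing A] [Algebra ℂ A] (D : Derivation ℂ A A)

lemma iter_sub' (n : ℕ) (x y : A) : (⇑D)^[n] (x - y) = (⇑D)^[n] x - (⇑D)^[n] y := by
  induction n generalizing x y with
  | zero => rfl
  | succ n ih => simp [Function.iterate_succ_apply, map_sub, ih]

lemma iter_mul_ker' {n : ℕ} {b : A} (hb : D b = 0) (x : A) :
    (⇑D)^[n] (b * x) = b * (⇑D)^[n] x := by
  induction n generalizing x with
  | zero => rfl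
  | succ n ih =>
    rw [Function.iterate_succ_apply, Function.iterate_succ_apply, D.leibniz, hb,
      smul_zero, add_zero, smul_eq_mul, ih]

lemma D_pow_ker' {g h : A} (hg : D g = h) (m : ℕ) :
    D (g ^ m) = (m : A) * (g ^ (m - 1) * h) := by
  induction m with
  | zero => simp
  | succ m ih =>
    rcases Nat.eq_zero_or_pos m with hm | hm
    · subst hm; simp [hg]
    · have h1 : g * g ^ (m - 1) = g ^ m := by rw [← pow_succ', Nat.sub_add_cancel hm]
      rw [pow_succ, D.leibniz, ih, hg, smul_eq_mul, smul_eq_mul, Nat.add_sub_cancel]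
      push_cast
      calc g ^ m * h + g * ((m : A) * (g ^ (m - 1) * h))
          = g ^ m * h + (m : A) * (g * g ^ (m-1) * h) := by ring
        _ = ((m : A) + 1) * (g ^ m * h) := by rw [h1]; ring

lemma iter_pow_ker' {g h : A} (hg : D g = h) (hh : D h = 0) (n k : ℕ) :
    (⇑D)^[k] (g ^ n) = ((n.descFactorial k : ℕ) : A) * (g ^ (n - k) * h ^ k) := by
  induction k with
  | zero => simp
  | succ k ih =>
    have hDh : D (h ^ k) = 0 := by rw [D_pow_ker' D hh]; ring
    rw [Function.iterate_succ_apply', ih, D.leibniz, D.leibniz, hDh, D_pow_ker' D hg,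
      Derivation.map_natCast, Nat.descFactorial_succ]
    push_cast
    rw [Nat.sub_sub]
    simp only [smul_eq_mul, smul_zero, mul_zero, zero_add, zero_mul, add_zero]
    rw [pow_succ]
    ring

lemma iter_sum' {ι : Type*} (n : ℕ) (s : Finset ι) (f : ι → A) :
    (⇑D)^[n] (∑ i ∈ s, f i) = ∑ i ∈ s, (⇑D)^[n] (f i) := by
  induction n with
  | zero => rfl
  | succ n ih =>
    rw [Function.iterate_succ_apply', ih, map_sum]
    exact Finset.sum_congr rfl fun i _ => (Function.iterate_succ_apply' (⇑D) n (f i)).symm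

lemma ker_mul' {b c : A} (hb : D b = 0) (hc : D c = 0) : D (b * c) = 0 := by
  rw [D.leibniz, hb, hc, smul_zero, smul_zero, add_zero]

lemma ker_pow' {b : A} (hb : D b = 0) (k : ℕ) : D (b ^ k) = 0 := by
  rw [D_pow_ker' D hb]; ring

lemma indep' [IsDomain A] {g h : A} (hg : D g = h) (hh : D h = 0) (hne : h ≠ 0) :
    ∀ d (b : ℕ → A), (∀ i, D (b i) = 0) →
      (∑ i ∈ range (d + 1), b i * (g ^ i * h ^ (d - i))) = 0 → ∀ i ≤ d, b i = 0 := by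
  haveI : CharZero A := charZero_of_injective_algebraMap (algebraMap ℂ A).injective
  intro d
  induction d with
  | zero =>
    intro b hb hsum i hi
    interval_cases i
    simpa using hsum
  | succ d ih =>
    intro b hb hsum i hi
    have key : b (d + 1) = 0 := by
      have h2 := congrArg (⇑D)^[d+1] hsum
      rw [iter_sum' D, Function.iterate_fixed (map_zero D)] at h2
      have h3 : ∀ j ∈ range (d + 2),
          (⇑D)^[d+1] (b j * (g ^ j * h ^ (d + 1 - j))) =
            if j = d + 1 then ((d+1).factorial : A) * (b (d+1) * h ^ (d+1)) else 0 := by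
        intro j hj
        have hbh : D (b j * h ^ (d + 1 - j)) = 0 :=
          ker_mul' D (hb j) (ker_pow' D hh _)
        have : b j * (g ^ j * h ^ (d + 1 - j)) = (b j * h ^ (d + 1 - j)) * g ^ j := by ring
        rw [this, iter_mul_ker' D hbh, iter_pow_ker' D hg hh]
        rcases eq_or_lt_of_le (Nat.lt_succ_iff.mp (mem_range.mp hj)) with hcase | hcase
        · subst hcase
          rw [if_pos rfl]
          simp only [Nat.descFactorial_self, Nat.sub_self, pow_zero]
          ring
        · rw [if_neg (by omega)]
          rw [Nat.descFactorial_eq_zero_iff_lt.mpr hcase]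
          push_cast
          ring
      rw [Finset.sum_congr rfl h3, Finset.sum_ite_eq' (range (d+2)) (d+1)] at h2
      rw [if_pos (by simp)] at h2
      have hf : ((d+1).factorial : A) ≠ 0 := Nat.cast_ne_zero.mpr (Nat.factorial_ne_zero _)
      have := mul_eq_zero.mp h2
      rcases this with h4 | h4
      · exact absurd h4 hf
      · rcases mul_eq_zero.mp h4 with h5 | h5
        · exact h5
        · exact absurd h5 (pow_ne_zero _ hne)
    rcases eq_or_lt_of_le hi with hcase | hcase
    · rw [hcase]; exact key
    · have hi' : i ≤ d := by omega
      apply ih b hb _ i hi'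
      have hs2 : ∑ j ∈ range (d + 1), b j * (g ^ j * h ^ (d + 1 - j)) = 0 := by
        rw [Finset.sum_range_succ, key, zero_mul, add_zero] at hsum
        exact hsum
      have hs3 : ∑ j ∈ range (d + 1), b j * (g ^ j * h ^ (d + 1 - j)) =
          (∑ j ∈ range (d + 1), b j * (g ^ j * h ^ (d - j))) * h := by
        rw [Finset.sum_mul]
        apply Finset.sum_congr rfl
        intro j hj
        have : d + 1 - j = (d - j) + 1 := by
          have := mem_range.mp hj; omega
        rw [this, pow_succ]
        ring
      rw [hs3] at hs2
      rcases mul_eq_zero.mp hs2 with h6 | h6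
      · exact h6
      · exact absurd h6 hne

lemma core_iter' {g h : A} (hg : D g = h) (hh : D h = 0) (n : ℕ) (a : A)
    (ha : (⇑D)^[n+1] a = 0) :
    (⇑D)^[n] ((n.factorial : A) * h ^ n * a - (⇑D)^[n] a * g ^ n) = 0 := by
  have hker : D ((n.factorial : A) * h ^ n) = 0 :=
    ker_mul' D (Derivation.map_natCast D _) (ker_pow' D hh n)
  have hc : D ((⇑D)^[n] a) = 0 := by
    rw [← Function.iterate_succ_apply' (⇑D) n a]; exact ha
  rw [iter_sub' D, iter_mul_ker' D hker, iter_mul_ker' D hc,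
    iter_pow_ker' D hg hh, Nat.descFactorial_self, Nat.sub_self, pow_zero]
  ring

lemma mul_ker_D {b : A} (hb : D b = 0) (x : A) : D (b * x) = b * D x := by
  rw [D.leibniz, hb, smul_zero, add_zero, smul_eq_mul]

end aux

set_option maxHeartbeats 2000000 in
set_option synthInstance.maxHeartbeats 400000 in
theorem slice_core
    (A : Type) [CommRing A] [IsDomain A] [Algebra ℂ A]
    (D : Derivation ℂ A A)
    (hLND : ∀ a : A, ∃ n : ℕ, (⇑D)^[n] a = 0)
    (g h : A) (hg : D g = h) (hh : D h = 0) (hne : h ≠ 0) :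
      ∃ Φ : Polynomial (Localization.Away (⟨h, hh⟩ : D.kerSubalgebra))
              ≃ₐ[ℂ] Localization.Away h,
        (∀ b : D.kerSubalgebra,
            Φ (C (algebraMap (D.kerSubalgebra)
                (Localization.Away (⟨h, hh⟩ : D.kerSubalgebra)) b))
              = algebraMap A (Localization.Away h) (b : A)) ∧
        Φ X = IsLocalization.mk' (Localization.Away h) g
                ⟨h, Submonoid.mem_powers h⟩ ∧
        ∃ D' : Derivation ℂ (Localization.Away h) (Localization.Away h),
          (∀ a : A, D' (algebraMap A (Localization.Away h) a)
              = algebraMap A (Localization.Away h) (D a)) ∧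
          ∀ p : Polynomial (Localization.Away (⟨h, hh⟩ : D.kerSubalgebra)),
            D' (Φ p) = Φ (derivative p) := by
  classical
  set B := D.kerSubalgebra with hB
  set h' : B := (⟨h, hh⟩ : B) with hh'
  set Bh := Localization.Away h' with hBh
  set L := Localization.Away h with hL
  set ι := algebraMap A L with hι
  have hιinj : Function.Injective ι :=
    IsLocalization.injective L (powers_le_nonZeroDivisors_of_noZeroDivisors hne)
  have hιh : IsUnit (ι h) := IsLocalization.map_units L ⟨h, Submonoid.mem_powers h⟩
  set toL : B →ₐ[ℂ] L := (IsScalarTower.toAlgHom ℂ A L).comp (Subalgebra.val B) with htoL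
  have hu : ∀ y : Submonoid.powers h', IsUnit (toL y) := by
    rintro ⟨y, k, rfl⟩
    have : toL (h' ^ k) = (ι h) ^ k := by
      simp [htoL, hι]; rfl
    rw [this]
    exact hιh.pow k
  set fL : Bh →ₐ[ℂ] L := IsLocalization.liftAlgHom (M := Submonoid.powers h') hu with hfL
  set s : L := IsLocalization.mk' L g ⟨h, Submonoid.mem_powers h⟩ with hs
  set Φ₀ : Polynomial Bh →ₐ[ℂ] L := aevalTower fL s with hΦ₀
  -- basic facts
  have eq1 : ∀ b : B, Φ₀ (C (algebraMap B Bh b)) = ι (b : A) := by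
    intro b
    rw [hΦ₀, aevalTower_C, hfL, IsLocalization.liftAlgHom_apply, IsLocalization.lift_eq]
    rfl
  have eq2 : ι h * s = ι g := by
    rw [hs, mul_comm]
    exact IsLocalization.mk'_spec L g ⟨h, Submonoid.mem_powers h⟩
  have hcoe : (h' : A) = h := rfl
  have eq1h : Φ₀ (C (algebraMap B Bh h')) = ι h := by rw [eq1 h', hcoe]
  have eq3 : Φ₀ (C (algebraMap B Bh h') * X) = ι g := by
    rw [map_mul, aevalTower_X, eq1h]
    exact eq2
  set w : Bh := IsLocalization.mk' Bh 1 ⟨h', Submonoid.mem_powers h'⟩ with hw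
  have h2 : (algebraMap B Bh) h' * w = 1 := by
    have h3 := IsLocalization.mk'_spec' Bh (1 : B) ⟨h', Submonoid.mem_powers h'⟩
    rw [map_one] at h3
    exact h3
  have hinv : ι h * Φ₀ (C w) = 1 := by
    rw [← eq1h, ← map_mul, ← map_mul, h2, map_one, map_one]
  -- surjectivity
  have hrange : ∀ (n : ℕ) (a : A), (⇑D)^[n] a = 0 → ι a ∈ Φ₀.range := by
    intro n
    induction n with
    | zero =>
      intro a ha
      simp only [Function.iterate_zero, id_eq] at ha
      rw [ha, map_zero]
      exact zero_mem _
    | succ n ih =>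
      intro a ha
      set c : A := (⇑D)^[n] a with hc
      have hcker : D c = 0 := by
        rw [hc, ← Function.iterate_succ_apply' (⇑D) n a]; exact ha
      set a' : A := (n.factorial : A) * h ^ n * a - c * g ^ n with ha'def
      have ha' : (⇑D)^[n] a' = 0 := core_iter' D hg hh n a ha
      have h1 : ι a' ∈ Φ₀.range := ih a' ha'
      have hca : ι c ∈ Φ₀.range := ⟨C (algebraMap B Bh ⟨c, hcker⟩), eq1 _⟩
      have hga : ι g ∈ Φ₀.range := ⟨_, eq3⟩
      have hwmem : Φ₀ (C w) ∈ Φ₀.range := ⟨C w, rfl⟩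
      have hsum : ι a' + ι c * (ι g) ^ n ∈ Φ₀.range :=
        add_mem h1 (mul_mem hca (pow_mem hga n))
      have hkey : (n.factorial : ℂ)⁻¹ • (Φ₀ (C w)) ^ n * (ι a' + ι c * (ι g) ^ n)
          = ι a := by
        have hrw : ι a' + ι c * (ι g) ^ n = (n.factorial : L) * (ι h) ^ n * ι a := by
          have : (ι a' : L) = ι ((n.factorial : A) * h ^ n * a) - ι (c * g ^ n) := by
            rw [ha'def, map_sub]
          rw [this]
          push_cast [map_mul, map_pow, map_natCast]
          ring
        rw [hrw]
        have hfac : (n.factorial : ℂ)⁻¹ •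
            ((n.factorial : L) * (ι h) ^ n * (Φ₀ (C w)) ^ n) = 1 := by
          have hn : ((n.factorial : ℂ)) ≠ 0 := by
            exact_mod_cast Nat.cast_ne_zero.mpr (Nat.factorial_ne_zero n)
          have h4 : (ι h * Φ₀ (C w)) ^ n = 1 := by rw [hinv, one_pow]
          have h5 : (ι h) ^ n * (Φ₀ (C w)) ^ n = 1 := by rw [← mul_pow, hinv, one_pow]
          rw [mul_assoc, h5, mul_one]
          rw [Algebra.smul_def, ← map_natCast (algebraMap ℂ L) n.factorial, ← map_mul]
          rw [inv_mul_cancel₀ hn, map_one]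
        calc (n.factorial : ℂ)⁻¹ • (Φ₀ (C w)) ^ n *
              ((n.factorial : L) * (ι h) ^ n * ι a)
            = ((n.factorial : ℂ)⁻¹ •
                ((n.factorial : L) * (ι h) ^ n * (Φ₀ (C w)) ^ n)) * ι a := by
              rw [smul_mul_assoc, smul_mul_assoc]
              congr 1
              rw [← mul_assoc, mul_comm ((Φ₀ (C w)) ^ n) ((n.factorial : L) * (ι h) ^ n)]
          _ = ι a := by rw [hfac, one_mul]
      rw [← hkey]
      exact mul_mem (Subalgebra.smul_mem _ (pow_mem hwmem n) _) hsum
  have hsurj : Function.Surjective Φ₀ := by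
    rw [← AlgHom.range_eq_top]
    rw [eq_top_iff]
    rintro z -
    obtain ⟨a, y, hz⟩ := IsLocalization.exists_mk'_eq (M := Submonoid.powers h) z
    obtain ⟨k, hk⟩ := y.2
    obtain ⟨n, hn⟩ := hLND a
    have hmem := hrange n a hn
    have hyz : z * ι (y : A) = ι a := by
      rw [← hz]; exact IsLocalization.mk'_spec L a y
    have hzval : z = ι a * (Φ₀ (C w)) ^ k := by
      have h6 : (ι h) ^ k * (Φ₀ (C w)) ^ k = 1 := by rw [← mul_pow, hinv, one_pow]
      have h7 : ι (y : A) = (ι h) ^ k := by rw [← hk, map_pow]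
      calc z = z * ((ι h) ^ k * (Φ₀ (C w)) ^ k) := by rw [h6, mul_one]
        _ = (z * (ι h) ^ k) * (Φ₀ (C w)) ^ k := by rw [mul_assoc]
        _ = (z * ι (y : A)) * (Φ₀ (C w)) ^ k := by rw [h7]
        _ = ι a * (Φ₀ (C w)) ^ k := by rw [hyz]
    have hwm : Φ₀ (C w) ∈ Φ₀.range := ⟨C w, rfl⟩
    rw [hzval]
    exact mul_mem hmem (pow_mem hwm k)
  -- injectivity
  have eqf : ∀ b : B, fL (algebraMap B Bh b) = ι (b : A) := by
    intro b
    have h8 := eq1 b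
    rwa [hΦ₀, aevalTower_C] at h8
  have hinj : Function.Injective Φ₀ := by
    rw [injective_iff_map_eq_zero]
    intro p hp
    set d := p.natDegree with hd
    obtain ⟨b0, hb0⟩ := IsLocalization.exist_integer_multiples
      (Submonoid.powers h') (Finset.range (d+1)) (fun i => p.coeff i)
    have hcf : ∀ i ∈ Finset.range (d+1),
        ∃ c : B, algebraMap B Bh c = (b0 : B) • p.coeff i := fun i hi => hb0 i hi
    choose cf hc using hcf
    have hc' : ∀ (i : ℕ) (hi : i ∈ Finset.range (d+1)),
        algebraMap B Bh (cf i hi) = algebraMap B Bh ((b0 : B)) * p.coeff i := by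
      intro i hi
      rw [hc i hi]
      exact Algebra.smul_def ((b0 : B)) (p.coeff i)
    set cfun : ℕ → A := fun i =>
      if hi : i ∈ Finset.range (d+1) then (cf i hi : A) else 0 with hcfun
    have hpsum : ∑ i ∈ Finset.range (d+1), fL (p.coeff i) * s ^ i = 0 := by
      have h9 : Φ₀ p = eval₂ (fL : Bh →+* L) s p := rfl
      rw [h9, eval₂_eq_sum_range] at hp
      exact hp
    have hcfeq : ∀ (i : ℕ) (hi : i ∈ Finset.range (d+1)),
        ι (cfun i) = fL (algebraMap B Bh (cf i hi)) := by
      intro i hi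
      rw [eqf]
      simp only [hcfun, dif_pos hi]
    have hzero2 : ∑ i ∈ Finset.range (d+1), ι (cfun i) * (s ^ i * (ι h) ^ d) = 0 := by
      have expand : ∀ i ∈ Finset.range (d+1),
          ι (cfun i) * (s ^ i * (ι h) ^ d)
          = (fL (algebraMap B Bh ((b0 : B))) * (ι h) ^ d) * (fL (p.coeff i) * s ^ i) := by
        intro i hi
        rw [hcfeq i hi, hc' i hi, map_mul]
        ring
      rw [Finset.sum_congr rfl expand, ← Finset.mul_sum, hpsum, mul_zero]
    have h11 : ∀ i, i ≤ d → s ^ i * (ι h) ^ d = ι (g ^ i * h ^ (d - i)) := by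
      intro i hi
      have h12 : (ι h) ^ d = (ι h) ^ i * (ι h) ^ (d - i) := by
        rw [← pow_add, Nat.add_sub_cancel' hi]
      rw [h12, ← mul_assoc, ← mul_pow, mul_comm s (ι h), eq2, map_mul, map_pow, map_pow]
    have hsumA : ∑ i ∈ Finset.range (d+1), cfun i * (g ^ i * h ^ (d - i)) = 0 := by
      apply hιinj
      rw [map_sum, map_zero]
      have : ∀ i ∈ Finset.range (d+1),
          ι (cfun i * (g ^ i * h ^ (d - i))) = ι (cfun i) * (s ^ i * (ι h) ^ d) := by
        intro i hi
        rw [map_mul, h11 i (Nat.lt_succ_iff.mp (Finset.mem_range.mp hi))]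
      rw [Finset.sum_congr rfl this]
      exact hzero2
    have hkerc : ∀ i, D (cfun i) = 0 := by
      intro i
      simp only [hcfun]
      split
      · next hi => exact (cf i hi).2
      · exact map_zero D
    have hcoeff0 : ∀ i ≤ d, p.coeff i = 0 := by
      intro i hi
      have hmem : i ∈ Finset.range (d+1) := Finset.mem_range.mpr (Nat.lt_succ_of_le hi)
      have h13 : cfun i = 0 := indep' D hg hh hne d cfun hkerc hsumA i hi
      have h14 : cf i hmem = 0 := by
        apply Subtype.ext
        have : cfun i = (cf i hmem : A) := by simp only [hcfun, dif_pos hmem]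
        rw [← this, h13]; rfl
      have h15 : algebraMap B Bh ((b0 : B)) * p.coeff i = 0 := by
        rw [← hc' i hmem, h14, map_zero]
      exact ((IsLocalization.map_units Bh b0).mul_right_eq_zero).mp h15
    ext i
    rcases le_or_gt i d with hi | hi
    · rw [hcoeff0 i hi, coeff_zero]
    · rw [coeff_eq_zero_of_natDegree_lt hi, coeff_zero]
  -- the algebra isomorphism
  set Φ : Polynomial Bh ≃ₐ[ℂ] L := AlgEquiv.ofBijective Φ₀ ⟨hinj, hsurj⟩ with hΦdef
  have hΦap : ∀ q : Polynomial Bh, Φ q = Φ₀ q := fun q => rfl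
  -- the derivation on L
  set D' : Derivation ℂ L L :=
    { toLinearMap := Φ.toLinearMap ∘ₗ (((derivative (R := Bh)).restrictScalars ℂ) ∘ₗ
        Φ.symm.toLinearMap)
      map_one_eq_zero' := by
        show Φ (derivative (Φ.symm 1)) = 0
        rw [map_one, derivative_one, map_zero]
      leibniz' := by
        intro x y
        show Φ (derivative (Φ.symm (x * y)))
          = x • Φ (derivative (Φ.symm y)) + y • Φ (derivative (Φ.symm x))
        rw [map_mul, derivative_mul, map_add, map_mul, map_mul,
          AlgEquiv.apply_symm_apply, AlgEquiv.apply_symm_apply, smul_eq_mul, smul_eq_mul,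
          add_comm (Φ (derivative (Φ.symm x)) * y), mul_comm (Φ (derivative (Φ.symm x))) y] }
    with hD'def
  have hD'ap : ∀ q : Polynomial Bh, D' (Φ₀ q) = Φ₀ (derivative q) := by
    intro q
    show Φ (derivative (Φ.symm (Φ q))) = Φ₀ (derivative q)
    rw [AlgEquiv.symm_apply_apply]
    exact hΦap _
  have F1 : ∀ (b : A) (_ : D b = 0), D' (ι b) = 0 := by
    intro b hb
    have h20 : Φ₀ (C (algebraMap B Bh ⟨b, hb⟩)) = ι b := eq1 ⟨b, hb⟩
    rw [← h20, hD'ap, derivative_C, map_zero]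
  have F2 : D' (ι g) = ι h := by
    rw [← eq3, hD'ap]
    have h21 : derivative (C (algebraMap B Bh h') * X) = C (algebraMap B Bh h') := by
      rw [derivative_mul, derivative_C, derivative_X, zero_mul, mul_one, zero_add]
    rw [h21, eq1h]
  have main : ∀ (n : ℕ) (a : A), (⇑D)^[n] a = 0 → D' (ι a) = ι (D a) := by
    intro n
    induction n with
    | zero =>
      intro a ha
      simp only [Function.iterate_zero, id_eq] at ha
      rw [ha]
      simp
    | succ n ih =>
      intro a ha
      set c := (⇑D)^[n] a with hcdef
      have hcker : D c = 0 := by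
        rw [hcdef, ← Function.iterate_succ_apply' (⇑D) n a]; exact ha
      have hkerf : D ((n.factorial : A) * h ^ n) = 0 :=
        ker_mul' D (Derivation.map_natCast D _) (ker_pow' D hh n)
      set a' := (n.factorial : A) * h ^ n * a - c * g ^ n with ha'def
      have ha' : (⇑D)^[n] a' = 0 := core_iter' D hg hh n a ha
      have iha' : D' (ι a') = ι (D a') := ih a' ha'
      have hIL : (ι a' : L) = ι ((n.factorial : A) * h ^ n) * ι a - ι c * (ι g) ^ n := by
        rw [ha'def]
        simp only [map_sub, map_mul, map_pow]
      have hDa' : D a' = ((n.factorial : A) * h ^ n) * D a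
          - c * ((n : A) * (g ^ (n-1) * h)) := by
        rw [ha'def, map_sub, mul_ker_D D hkerf, mul_ker_D D hcker, D_pow_ker' D hg]
      have happ : ι (D a') = ι ((n.factorial : A) * h ^ n) * D' (ι a)
          - ι c * ((n : L) * ((ι g) ^ (n-1) * ι h)) := by
        rw [← iha', hIL, map_sub, D'.leibniz, D'.leibniz,
          F1 _ hkerf, F1 _ hcker, smul_zero, add_zero, smul_zero, add_zero,
          Derivation.leibniz_pow, F2]
        simp only [smul_eq_mul, nsmul_eq_mul]
        try ring
      have h16 : ι ((n.factorial : A) * h ^ n) * ι (D a)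
          = ι ((n.factorial : A) * h ^ n) * D' (ι a) := by
        have h17 : ι (D a') = ι ((n.factorial : A) * h ^ n) * ι (D a)
            - ι c * ((n : L) * ((ι g) ^ (n-1) * ι h)) := by
          rw [hDa']
          simp only [map_sub, map_mul, map_pow, map_natCast]
        have h18 := h17.symm.trans happ
        exact sub_left_inj.mp h18
      have hufac : IsUnit (ι ((n.factorial : A) * h ^ n)) := by
        rw [map_mul, map_pow, map_natCast ι, ← map_natCast (algebraMap ℂ L) n.factorial]
        exact IsUnit.mul
          ((isUnit_iff_ne_zero.mpr
            (Nat.cast_ne_zero.mpr (Nat.factorial_ne_zero n) : (n.factorial : ℂ) ≠ 0)).map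
              (algebraMap ℂ L)) (hιh.pow n)
      exact (hufac.mul_left_cancel h16).symm
  refine ⟨Φ, ?_, ?_, D', ?_, ?_⟩
  · intro b
    exact eq1 b
  · show Φ X = s
    rw [hΦap]
    exact aevalTower_X fL s
  · intro a
    obtain ⟨n, hn⟩ := hLND a
    exact main n a hn
  · intro p
    exact hD'ap p

/-- the slice-theorem step in the proof of Proposition 3.5. Let `A` be an
integral domain over `ℂ`, `∂` a nonzero locally nilpotent ℂ-derivation of `A`, and
`B = ker ∂`. Then there exist `g, h ∈ A` with `∂g = h`, `∂h = 0` and `h ≠ 0`, such that the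
ℂ-algebra homomorphism `Φ : B_h[X] → A_h` extending the canonical map `B_h → A_h` and
sending `X` to `g/h` is an isomorphism; moreover, under `Φ` the canonical extension of `∂`
to `A_h` corresponds to the derivation `d/dX` of `B_h[X]`.

(The isomorphism `Φ` is uniquely determined by the listed compatibilities: a ring
homomorphism from a localization is determined by its restriction to `B`, and an algebra
homomorphism from `B_h[X]` is determined by its values on `B_h` and on `X`; likewise the
extension `D'` of `∂` to `A_h` is uniquely determined by commuting with the localization
map.) -/
theorem slice_theorem_for_locallyNilpotentDerivation
    (A : Type) [CommRing A] [IsDomain A] [Algebra ℂ A]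
    (D : Derivation ℂ A A) (hD : D ≠ 0)
    (hLND : ∀ a : A, ∃ n : ℕ, (⇑D)^[n] a = 0) :
    ∃ (g h : A) (_ : D g = h) (hh : D h = 0) (_ : h ≠ 0),
      ∃ Φ : Polynomial (Localization.Away (⟨h, hh⟩ : D.kerSubalgebra))
              ≃ₐ[ℂ] Localization.Away h,
        (∀ b : D.kerSubalgebra,
            Φ (C (algebraMap (D.kerSubalgebra)
                (Localization.Away (⟨h, hh⟩ : D.kerSubalgebra)) b))
              = algebraMap A (Localization.Away h) (b : A)) ∧
        Φ X = IsLocalization.mk' (Localization.Away h) g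
                ⟨h, Submonoid.mem_powers h⟩ ∧
        ∃ D' : Derivation ℂ (Localization.Away h) (Localization.Away h),
          (∀ a : A, D' (algebraMap A (Localization.Away h) a)
              = algebraMap A (Localization.Away h) (D a)) ∧
          ∀ p : Polynomial (Localization.Away (⟨h, hh⟩ : D.kerSubalgebra)),
            D' (Φ p) = Φ (derivative p) := by
  classical
  have hexa : ∃ a : A, D a ≠ 0 := by
    by_contra hcon
    push_neg at hcon
    apply hD
    ext x
    simp [hcon x]
  obtain ⟨a, hane⟩ := hexa
  have hex : ∃ k, (⇑D)^[k] a = 0 := hLND a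
  set k := Nat.find hex with hk
  have hspec : (⇑D)^[k] a = 0 := Nat.find_spec hex
  have h1lt : 1 < k := by
    by_contra hle
    push_neg at hle
    interval_cases k
    · exact hane (by rw [show a = 0 by simpa using hspec]; exact map_zero D)
    · exact hane (by simpa using hspec)
  have hg : D ((⇑D)^[k-2] a) = (⇑D)^[k-1] a := by
    have h30 := Function.iterate_succ_apply' (⇑D) (k-2) a
    rw [show (k - 2).succ = k - 1 by omega] at h30
    exact h30.symm
  have hh : D ((⇑D)^[k-1] a) = 0 := by
    have h31 := Function.iterate_succ_apply' (⇑D) (k-1) a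
    rw [show (k - 1).succ = k by omega] at h31
    rw [← h31]
    exact hspec
  have hne : (⇑D)^[k-1] a ≠ 0 := Nat.find_min hex (by omega)
  exact ⟨(⇑D)^[k-2] a, (⇑D)^[k-1] a, hg, hh, hne,
    slice_core A D hLND ((⇑D)^[k-2] a) ((⇑D)^[k-1] a) hg hh hne⟩
end

section
/- Let A be a finitely generated commutative ℂ-algebra which is an integral domain, let f ∈ A be nonzero, and let ∂ be a locally nilpotent ℂ-derivation of the localization A_f = A[1/f] satisfying ∂(f/1) = 0. Then there exists N ∈ ℕ such that the derivation f^N·∂ of A_f maps the image of A in A_f into itself, and the induced ℂ-derivation of A is locally nilpotent (and it is nonzero if ∂ is nonzero). -/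
/-- extension step in the proof of Proposition 3.5, (ii)⇒(i). Let `A` be a
finitely generated integral ℂ-algebra, let `f ∈ A` be nonzero, and let `∂` be a locally
nilpotent ℂ-derivation of `A_f = A[1/f]` with `∂(f/1) = 0`. Then there is an `N ∈ ℕ` such
that the derivation `f^N·∂` of `A_f` maps the image of `A` into itself; i.e. there is a
ℂ-derivation `D'` of `A` whose extension to `A_f` is `f^N·∂`, and this induced derivation
`D'` is locally nilpotent (and it is nonzero if `∂` is nonzero). -/
theorem locallyNilpotentDerivation_extends_from_localization
    (A : Type) [CommRing A] [IsDomain A] [Algebra ℂ A] [Algebra.FiniteType ℂ A]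
    (f : A) (hf : f ≠ 0)
    (D : Derivation ℂ (Localization.Away f) (Localization.Away f))
    (hDf : D (algebraMap A (Localization.Away f) f) = 0)
    (hLND : ∀ x : Localization.Away f, ∃ n : ℕ, (⇑D)^[n] x = 0) :
    ∃ N : ℕ, ∃ D' : Derivation ℂ A A,
      (∀ a : A, algebraMap A (Localization.Away f) (D' a) =
        algebraMap A (Localization.Away f) f ^ N * D (algebraMap A (Localization.Away f) a)) ∧
      (∀ a : A, ∃ n : ℕ, (⇑D')^[n] a = 0) ∧
      (D ≠ 0 → D' ≠ 0) := by
  classical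
  set S := Localization.Away f with hS
  set ι : A →+* S := algebraMap A S with hι
  have hinj : Function.Injective ι :=
    IsLocalization.injective S (powers_le_nonZeroDivisors_of_noZeroDivisors hf)
  -- D kills powers of ι f
  have hDfn : ∀ n : ℕ, D (ι f ^ n) = 0 := by
    intro n
    rw [Derivation.leibniz_pow, hDf]
    simp
  -- every element of S is (a / f^n)
  have key : ∀ z : S, ∃ n : ℕ, ∃ a : A, ι f ^ n * z = ι a := by
    intro z
    obtain ⟨⟨a, s'⟩, h⟩ := IsLocalization.surj (Submonoid.powers f) z
    obtain ⟨n, hn⟩ := s'.2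
    have hn' : f ^ n = (s' : A) := hn
    refine ⟨n, a, ?_⟩
    rw [← map_pow, hn', mul_comm]
    exact h
  choose k g hg using fun x : A => key (D (ι x))
  obtain ⟨s, hs⟩ := (Algebra.FiniteType.out : (⊤ : Subalgebra ℂ A).FG)
  set N := s.sup k with hNdef
  -- membership claim
  have hsmul : ∀ (c : ℂ) (x : A), ι (c • x) = c • ι x := by
    intro c x
    rw [Algebra.smul_def, Algebra.smul_def, map_mul, ← IsScalarTower.algebraMap_apply]
  have hmem : ∀ x : A, ∃ b : A, ι b = ι f ^ N * D (ι x) := by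
    intro x
    have hx : x ∈ Algebra.adjoin ℂ (s : Set A) := hs ▸ Algebra.mem_top
    induction hx using Algebra.adjoin_induction with
    | mem y hy =>
      have hky : k y ≤ N := Finset.le_sup hy
      refine ⟨f ^ (N - k y) * g y, ?_⟩
      rw [map_mul, map_pow, ← hg, ← mul_assoc, ← pow_add]
      congr 2
      omega
    | algebraMap c =>
      refine ⟨0, ?_⟩
      have : ι (algebraMap ℂ A c) = algebraMap ℂ S c := (IsScalarTower.algebraMap_apply ℂ A S c).symm
      rw [this, Derivation.map_algebraMap]
      simp
    | add y z hy hz ihy ihz =>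
      obtain ⟨b₁, h₁⟩ := ihy
      obtain ⟨b₂, h₂⟩ := ihz
      exact ⟨b₁ + b₂, by rw [map_add, map_add, map_add, mul_add, h₁, h₂]⟩
    | mul y z hy hz ihy ihz =>
      obtain ⟨b₁, h₁⟩ := ihy
      obtain ⟨b₂, h₂⟩ := ihz
      refine ⟨y * b₂ + z * b₁, ?_⟩
      rw [map_add, map_mul, map_mul, map_mul, Derivation.leibniz, smul_eq_mul, smul_eq_mul,
        mul_add, h₁, h₂]
      ring
  choose D0 hD0 using hmem
  -- linear map
  have hadd : ∀ x y : A, D0 (x + y) = D0 x + D0 y := by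
    intro x y
    apply hinj
    rw [map_add, hD0, hD0, hD0, map_add, map_add, mul_add]
  have hsm : ∀ (c : ℂ) (x : A), D0 (c • x) = c • D0 x := by
    intro c x
    apply hinj
    rw [hD0, hsmul, hsmul, Derivation.map_smul, hD0, mul_smul_comm]
  let D' : Derivation ℂ A A :=
    { toFun := D0
      map_add' := hadd
      map_smul' := hsm
      map_one_eq_zero' := by
        apply hinj
        show ι (D0 1) = ι 0
        rw [hD0, map_one, Derivation.map_one_eq_zero, map_zero, mul_zero]
      leibniz' := by
        intro x y
        apply hinj
        show ι (D0 (x * y)) = ι (x • D0 y + y • D0 x)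
        rw [hD0, map_mul, Derivation.leibniz, smul_eq_mul, smul_eq_mul, map_add,
          smul_eq_mul, smul_eq_mul, map_mul, map_mul, hD0, hD0]
        ring }
  have hD' : ∀ a : A, ι (D' a) = ι f ^ N * D (ι a) := hD0
  refine ⟨N, D', hD', ?_, ?_⟩
  · -- local nilpotence
    have hiter : ∀ (n : ℕ) (a : A), ι ((⇑D')^[n] a) = (ι f ^ N) ^ n * (⇑D)^[n] (ι a) := by
      intro n
      induction n with
      | zero => intro a; simp
      | succ n ih =>
        intro a
        rw [Function.iterate_succ_apply', Function.iterate_succ_apply', hD', ih]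
        have hDc : D ((ι f ^ N) ^ n) = 0 := by rw [← pow_mul]; exact hDfn _
        rw [Derivation.leibniz, smul_eq_mul, smul_eq_mul, hDc, mul_zero, add_zero]
        ring
    intro a
    obtain ⟨n, hn⟩ := hLND (ι a)
    refine ⟨n, hinj ?_⟩
    rw [hiter, hn, mul_zero, map_zero]
  · -- nonzero
    intro hD hD'0
    apply hD
    ext z
    obtain ⟨n, a, ha⟩ := key z
    have hu : IsUnit (ι f) := IsLocalization.Away.algebraMap_isUnit f
    have hDz : ∀ x : A, D (ι x) = 0 := by
      intro x
      have h1 : ι (D' x) = 0 := by rw [hD'0]; simp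
      rw [hD' x] at h1
      exact ((hu.pow N).mul_right_eq_zero).mp h1
    have := congrArg D ha
    rw [Derivation.leibniz, smul_eq_mul, smul_eq_mul, hDfn, hDz, mul_zero, add_zero] at this
    have := (hu.pow n).mul_right_eq_zero.mp this
    simpa using this
end

section
/- Let I be the principal ideal (xy − zu) of the polynomial ring ℂ[x,y,z,u] and let A = ℂ[x,y,z,u]/I. The derivations ∂₁ = u·∂/∂x + y·∂/∂z and ∂₂ = u·∂/∂y + x·∂/∂z of ℂ[x,y,z,u] map I into I, hence induce ℂ-derivations of A; these induced derivations of A are nonzero, locally nilpotent, and commute with each other. -/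
open MvPolynomial

/-- The quadratic polynomial `xy − zu` in `ℂ[x,y,z,u]` (with `x = X 0`, `y = X 1`,
`z = X 2`, `u = X 3`). -/
noncomputable def quadricPoly : MvPolynomial (Fin 4) ℂ := X 0 * X 1 - X 2 * X 3

/-- The principal ideal `(xy − zu)` of `ℂ[x,y,z,u]`. -/
noncomputable def quadricIdeal : Ideal (MvPolynomial (Fin 4) ℂ) := Ideal.span {quadricPoly}

/-- The coordinate ring `A = ℂ[x,y,z,u]/(xy − zu)` of the affine cone over the quadric
`{xy = zu} ⊆ ℙ³`. -/
noncomputable abbrev quadricConeRing : Type := MvPolynomial (Fin 4) ℂ ⧸ quadricIdeal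

/-- The derivation `∂₁ = u·∂/∂x + y·∂/∂z` of `ℂ[x,y,z,u]`. -/
noncomputable def der₁ : Derivation ℂ (MvPolynomial (Fin 4) ℂ) (MvPolynomial (Fin 4) ℂ) :=
  (X 3 : MvPolynomial (Fin 4) ℂ) •
      (pderiv 0 : Derivation ℂ (MvPolynomial (Fin 4) ℂ) (MvPolynomial (Fin 4) ℂ)) +
    (X 1 : MvPolynomial (Fin 4) ℂ) •
      (pderiv 2 : Derivation ℂ (MvPolynomial (Fin 4) ℂ) (MvPolynomial (Fin 4) ℂ))

/-- The derivation `∂₂ = u·∂/∂y + x·∂/∂z` of `ℂ[x,y,z,u]`. -/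
noncomputable def der₂ : Derivation ℂ (MvPolynomial (Fin 4) ℂ) (MvPolynomial (Fin 4) ℂ) :=
  (X 3 : MvPolynomial (Fin 4) ℂ) •
      (pderiv 1 : Derivation ℂ (MvPolynomial (Fin 4) ℂ) (MvPolynomial (Fin 4) ℂ)) +
    (X 0 : MvPolynomial (Fin 4) ℂ) •
      (pderiv 2 : Derivation ℂ (MvPolynomial (Fin 4) ℂ) (MvPolynomial (Fin 4) ℂ))

lemma der₁_X0 : der₁ (X 0 : MvPolynomial (Fin 4) ℂ) = X 3 := by
  simp [der₁, pderiv_X]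

lemma der₁_X1 : der₁ (X 1 : MvPolynomial (Fin 4) ℂ) = 0 := by
  simp [der₁, pderiv_X]

lemma der₁_X2 : der₁ (X 2 : MvPolynomial (Fin 4) ℂ) = X 1 := by
  simp [der₁, pderiv_X]

lemma der₁_X3 : der₁ (X 3 : MvPolynomial (Fin 4) ℂ) = 0 := by
  simp [der₁, pderiv_X]

lemma der₂_X0 : der₂ (X 0 : MvPolynomial (Fin 4) ℂ) = 0 := by
  simp [der₂, pderiv_X]

lemma der₂_X1 : der₂ (X 1 : MvPolynomial (Fin 4) ℂ) = X 3 := by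
  simp [der₂, pderiv_X]

lemma der₂_X2 : der₂ (X 2 : MvPolynomial (Fin 4) ℂ) = X 0 := by
  simp [der₂, pderiv_X]

lemma der₂_X3 : der₂ (X 3 : MvPolynomial (Fin 4) ℂ) = 0 := by
  simp [der₂, pderiv_X]

lemma der₁_quadric : der₁ quadricPoly = 0 := by
  simp only [quadricPoly, map_sub, Derivation.leibniz, der₁_X0, der₁_X1, der₁_X2, der₁_X3,
    smul_eq_mul]
  ring

lemma der₂_quadric : der₂ quadricPoly = 0 := by
  simp only [quadricPoly, map_sub, Derivation.leibniz, der₂_X0, der₂_X1, der₂_X2, der₂_X3,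
    smul_eq_mul]
  ring

lemma der_mem_ideal (D : Derivation ℂ (MvPolynomial (Fin 4) ℂ) (MvPolynomial (Fin 4) ℂ))
    (hq : D quadricPoly = 0) : ∀ p ∈ quadricIdeal, D p ∈ quadricIdeal := by
  intro p hp
  rw [quadricIdeal, Ideal.mem_span_singleton'] at hp
  obtain ⟨f, rfl⟩ := hp
  rw [Derivation.leibniz, hq, smul_zero, zero_add, smul_eq_mul]
  rw [quadricIdeal, Ideal.mem_span_singleton']
  exact ⟨D f, mul_comm _ _⟩

lemma mk_smul_c (c : ℂ) (p : MvPolynomial (Fin 4) ℂ) :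
    Ideal.Quotient.mk quadricIdeal (c • p) = c • Ideal.Quotient.mk quadricIdeal p := by
  rw [Algebra.smul_def c p, map_mul, Ideal.Quotient.mk_algebraMap, ← Algebra.smul_def]

/-- The underlying linear map of the lifted derivation. -/
noncomputable def liftLin (D : Derivation ℂ (MvPolynomial (Fin 4) ℂ) (MvPolynomial (Fin 4) ℂ))
    (hD : ∀ p ∈ quadricIdeal, D p ∈ quadricIdeal) :
    quadricConeRing →ₗ[ℂ] quadricConeRing where
  toFun := fun a => Quotient.liftOn' a (fun p => Ideal.Quotient.mk quadricIdeal (D p))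
    (fun p q h => by
      rw [Ideal.Quotient.eq, ← map_sub]
      exact hD _ ((Submodule.quotientRel_def _).mp h))
  map_add' := fun a b => by
    obtain ⟨p, rfl⟩ := Ideal.Quotient.mk_surjective a
    obtain ⟨q, rfl⟩ := Ideal.Quotient.mk_surjective b
    show Ideal.Quotient.mk quadricIdeal (D (p + q)) =
      Ideal.Quotient.mk quadricIdeal (D p) + Ideal.Quotient.mk quadricIdeal (D q)
    rw [map_add, map_add]
  map_smul' := fun c a => by
    obtain ⟨p, rfl⟩ := Ideal.Quotient.mk_surjective a
    show Ideal.Quotient.mk quadricIdeal (D (c • p)) =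
      c • Ideal.Quotient.mk quadricIdeal (D p)
    rw [Derivation.map_smul, mk_smul_c]

lemma liftLin_mk (D : Derivation ℂ (MvPolynomial (Fin 4) ℂ) (MvPolynomial (Fin 4) ℂ))
    (hD : ∀ p ∈ quadricIdeal, D p ∈ quadricIdeal) (p : MvPolynomial (Fin 4) ℂ) :
    liftLin D hD (Ideal.Quotient.mk quadricIdeal p) = Ideal.Quotient.mk quadricIdeal (D p) :=
  rfl

/-- Lift of a derivation preserving the ideal to the quotient. -/
noncomputable def liftDer (D : Derivation ℂ (MvPolynomial (Fin 4) ℂ) (MvPolynomial (Fin 4) ℂ))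
    (hD : ∀ p ∈ quadricIdeal, D p ∈ quadricIdeal) :
    Derivation ℂ quadricConeRing quadricConeRing where
  toLinearMap := liftLin D hD
  map_one_eq_zero' := by
    rw [show (1 : quadricConeRing) = Ideal.Quotient.mk quadricIdeal 1 from (map_one _).symm,
      liftLin_mk, D.map_one_eq_zero, map_zero]
  leibniz' := fun a b => by
    obtain ⟨p, rfl⟩ := Ideal.Quotient.mk_surjective a
    obtain ⟨q, rfl⟩ := Ideal.Quotient.mk_surjective b
    show liftLin D hD _ = _
    rw [← map_mul, liftLin_mk, liftLin_mk, liftLin_mk, D.leibniz, map_add,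
      smul_eq_mul, smul_eq_mul, smul_eq_mul, smul_eq_mul, map_mul, map_mul]

lemma liftDer_mk (D : Derivation ℂ (MvPolynomial (Fin 4) ℂ) (MvPolynomial (Fin 4) ℂ))
    (hD : ∀ p ∈ quadricIdeal, D p ∈ quadricIdeal) (p : MvPolynomial (Fin 4) ℂ) :
    liftDer D hD (Ideal.Quotient.mk quadricIdeal p) = Ideal.Quotient.mk quadricIdeal (D p) :=
  rfl

section IterateLemmas

variable {R A : Type*} [CommRing R] [CommRing A] [Algebra R A]
variable (D : Derivation R A A)

lemma der_iterate_zero (n : ℕ) : (⇑D)^[n] 0 = 0 := by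
  induction n with
  | zero => rfl
  | succ n ih => rw [Function.iterate_succ_apply, map_zero, ih]

lemma der_iterate_add (n : ℕ) (p q : A) :
    (⇑D)^[n] (p + q) = (⇑D)^[n] p + (⇑D)^[n] q := by
  induction n generalizing p q with
  | zero => rfl
  | succ n ih => rw [Function.iterate_succ_apply, map_add, ih,
      Function.iterate_succ_apply, Function.iterate_succ_apply]

lemma der_iterate_stable {n : ℕ} {p : A} (h : (⇑D)^[n] p = 0) (m : ℕ) (hm : n ≤ m) :
    (⇑D)^[m] p = 0 := by
  obtain ⟨j, rfl⟩ := Nat.exists_eq_add_of_le hm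
  rw [Nat.add_comm, Function.iterate_add_apply, h, der_iterate_zero]

lemma der_iterate_mul : ∀ k : ℕ, ∀ n m : ℕ, ∀ p q : A, n + m ≤ k + 1 →
    (⇑D)^[n] p = 0 → (⇑D)^[m] q = 0 → (⇑D)^[k] (p * q) = 0 := by
  intro k
  induction k with
  | zero =>
    intro n m p q hle hp hq
    rcases (by omega : n = 0 ∨ m = 0) with rfl | rfl
    · simp only [Function.iterate_zero, id] at hp
      simp [hp]
    · simp only [Function.iterate_zero, id] at hq
      simp [hq]
  | succ k ih =>
    intro n m p q hle hp hq
    match n, m with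
    | 0, m =>
      simp only [Function.iterate_zero, id] at hp
      simp [hp, der_iterate_zero]
    | n, 0 =>
      simp only [Function.iterate_zero, id] at hq
      simp [hq, der_iterate_zero]
    | n + 1, m + 1 =>
      rw [Function.iterate_succ_apply, D.leibniz, smul_eq_mul, smul_eq_mul,
        der_iterate_add]
      have h1 : (⇑D)^[k] (p * D q) = 0 := by
        refine ih (n + 1) m p (D q) (by omega) hp ?_
        rw [← Function.iterate_succ_apply, hq]
      have h2 : (⇑D)^[k] (q * D p) = 0 := by
        refine ih (m + 1) n q (D p) (by omega) hq ?_
        rw [← Function.iterate_succ_apply, hp]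
      rw [h1, h2, add_zero]

end IterateLemmas

/-- A derivation of `ℂ[x,y,z,u]` killing an iterate of each variable is locally
nilpotent. -/
lemma der_locally_nilpotent (D : Derivation ℂ (MvPolynomial (Fin 4) ℂ) (MvPolynomial (Fin 4) ℂ))
    (hX : ∀ i : Fin 4, (⇑D)^[2] (X i) = 0) (p : MvPolynomial (Fin 4) ℂ) :
    ∃ n : ℕ, (⇑D)^[n] p = 0 := by
  induction p using MvPolynomial.induction_on with
  | C a =>
    refine ⟨1, ?_⟩
    simpa using D.map_algebraMap (A := MvPolynomial (Fin 4) ℂ) a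
  | add p q hp hq =>
    obtain ⟨n, hn⟩ := hp
    obtain ⟨m, hm⟩ := hq
    exact ⟨max n m, by rw [der_iterate_add, der_iterate_stable D hn _ (le_max_left n m),
      der_iterate_stable D hm _ (le_max_right n m), add_zero]⟩
  | mul_X p i hp =>
    obtain ⟨n, hn⟩ := hp
    exact ⟨n + 2, der_iterate_mul D (n + 2) n 2 p (X i) (by omega) hn (hX i)⟩

lemma der₁_X_iterate (i : Fin 4) : (⇑der₁)^[2] (X i : MvPolynomial (Fin 4) ℂ) = 0 := by
  fin_cases i <;>
    simp [Function.iterate_succ_apply, der₁_X0, der₁_X1, der₁_X2, der₁_X3]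

lemma der₂_X_iterate (i : Fin 4) : (⇑der₂)^[2] (X i : MvPolynomial (Fin 4) ℂ) = 0 := by
  fin_cases i <;>
    simp [Function.iterate_succ_apply, der₂_X0, der₂_X1, der₂_X2, der₂_X3]

lemma der_comm (p : MvPolynomial (Fin 4) ℂ) : der₁ (der₂ p) = der₂ (der₁ p) := by
  have h : ⁅der₁, der₂⁆ = 0 := by
    apply derivation_ext
    intro i
    fin_cases i <;>
      simp [Derivation.commutator_apply, der₁_X0, der₁_X1, der₁_X2, der₁_X3,
        der₂_X0, der₂_X1, der₂_X2, der₂_X3]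
  have := congrArg (fun D : Derivation ℂ (MvPolynomial (Fin 4) ℂ) (MvPolynomial (Fin 4) ℂ) => D p) h
  simp only [Derivation.commutator_apply, Derivation.zero_apply] at this
  exact sub_eq_zero.mp this

lemma X3_notMem : (X 3 : MvPolynomial (Fin 4) ℂ) ∉ quadricIdeal := by
  intro h
  rw [quadricIdeal, Ideal.mem_span_singleton'] at h
  obtain ⟨f, hf⟩ := h
  have := congrArg (eval ![1, 0, 0, 1]) hf
  simp [quadricPoly] at this

lemma liftDer_iterate (D : Derivation ℂ (MvPolynomial (Fin 4) ℂ) (MvPolynomial (Fin 4) ℂ))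
    (hD : ∀ p ∈ quadricIdeal, D p ∈ quadricIdeal) (n : ℕ) (p : MvPolynomial (Fin 4) ℂ) :
    (⇑(liftDer D hD))^[n] (Ideal.Quotient.mk quadricIdeal p) =
      Ideal.Quotient.mk quadricIdeal ((⇑D)^[n] p) := by
  induction n generalizing p with
  | zero => rfl
  | succ n ih =>
    rw [Function.iterate_succ_apply, Function.iterate_succ_apply, liftDer_mk, ih]

/-- Example 3.3. The derivations `∂₁ = u·∂/∂x + y·∂/∂z` and
`∂₂ = u·∂/∂y + x·∂/∂z` of `ℂ[x,y,z,u]` map the ideal `I = (xy − zu)` into itself, hence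
induce ℂ-derivations of `A = ℂ[x,y,z,u]/I`; these induced derivations of `A` are nonzero,
locally nilpotent, and commute with each other. -/
theorem quadricCone_commuting_locally_nilpotent_derivations :
    (∀ p ∈ quadricIdeal, der₁ p ∈ quadricIdeal) ∧
    (∀ p ∈ quadricIdeal, der₂ p ∈ quadricIdeal) ∧
    ∃ E₁ E₂ : Derivation ℂ quadricConeRing quadricConeRing,
      (∀ p : MvPolynomial (Fin 4) ℂ,
          E₁ (Ideal.Quotient.mk quadricIdeal p) = Ideal.Quotient.mk quadricIdeal (der₁ p)) ∧
      (∀ p : MvPolynomial (Fin 4) ℂ,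
          E₂ (Ideal.Quotient.mk quadricIdeal p) = Ideal.Quotient.mk quadricIdeal (der₂ p)) ∧
      E₁ ≠ 0 ∧ E₂ ≠ 0 ∧
      (∀ a : quadricConeRing, ∃ n : ℕ, (⇑E₁)^[n] a = 0) ∧
      (∀ a : quadricConeRing, ∃ n : ℕ, (⇑E₂)^[n] a = 0) ∧
      (∀ a : quadricConeRing, E₁ (E₂ a) = E₂ (E₁ a)) := by
  have h₁ := der_mem_ideal der₁ der₁_quadric
  have h₂ := der_mem_ideal der₂ der₂_quadric
  refine ⟨h₁, h₂, liftDer der₁ h₁, liftDer der₂ h₂, liftDer_mk der₁ h₁, liftDer_mk der₂ h₂,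
    ?_, ?_, ?_, ?_, ?_⟩
  · intro h
    have h0 : liftDer der₁ h₁ (Ideal.Quotient.mk quadricIdeal (X 0)) = 0 := by rw [h]; rfl
    rw [liftDer_mk, der₁_X0, Ideal.Quotient.eq_zero_iff_mem] at h0
    exact X3_notMem h0
  · intro h
    have h0 : liftDer der₂ h₂ (Ideal.Quotient.mk quadricIdeal (X 1)) = 0 := by rw [h]; rfl
    rw [liftDer_mk, der₂_X1, Ideal.Quotient.eq_zero_iff_mem] at h0
    exact X3_notMem h0
  · intro a
    obtain ⟨p, rfl⟩ := Ideal.Quotient.mk_surjective a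
    obtain ⟨n, hn⟩ := der_locally_nilpotent der₁ der₁_X_iterate p
    exact ⟨n, by rw [liftDer_iterate, hn, map_zero]⟩
  · intro a
    obtain ⟨p, rfl⟩ := Ideal.Quotient.mk_surjective a
    obtain ⟨n, hn⟩ := der_locally_nilpotent der₂ der₂_X_iterate p
    exact ⟨n, by rw [liftDer_iterate, hn, map_zero]⟩
  · intro a
    obtain ⟨p, rfl⟩ := Ideal.Quotient.mk_surjective a
    rw [liftDer_mk, liftDer_mk, liftDer_mk, liftDer_mk, der_comm]
end

section
/- Let A = ⊕_{k≥0} ℂ[x,y,z]_{3k} be the third Veronese subalgebra of the polynomial ring ℂ[x,y,z], i.e. the ℂ-subalgebra consisting of all polynomials each of whose homogeneous components has degree divisible by 3. Then A admits a nonzero locally nilpotent ℂ-derivation (for instance, the derivation z⁴·∂/∂x of ℂ[x,y,z] is locally nilpotent and restricts to a nonzero locally nilpotent derivation of A). -/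
open MvPolynomial

/-- The third Veronese subalgebra `A = ⊕_{k≥0} ℂ[x,y,z]_{3k}` of `ℂ[x,y,z]`: the
ℂ-subalgebra consisting of all polynomials each of whose monomials (hence each of whose
homogeneous components) has total degree divisible by 3.  Here `x = X 0`, `y = X 1`,
`z = X 2` in `MvPolynomial (Fin 3) ℂ`. -/
noncomputable def veronese3 : Subalgebra ℂ (MvPolynomial (Fin 3) ℂ) where
  carrier := {p | ∀ d : Fin 3 →₀ ℕ, coeff d p ≠ 0 → 3 ∣ d.sum fun _ e => e}
  mul_mem' := by
    intro p q hp hq d hd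
    rw [coeff_mul] at hd
    obtain ⟨⟨u, v⟩, huv, hne⟩ := Finset.exists_ne_zero_of_sum_ne_zero hd
    rw [Finset.HasAntidiagonal.mem_antidiagonal] at huv
    have hu : coeff u p ≠ 0 := left_ne_zero_of_mul hne
    have hv : coeff v q ≠ 0 := right_ne_zero_of_mul hne
    have hsum : (u + v).sum (fun _ e => e) = u.sum (fun _ e => e) + v.sum (fun _ e => e) :=
      Finsupp.sum_add_index' (fun _ => rfl) (fun _ _ _ => rfl)
    have := dvd_add (hp u hu) (hq v hv)
    rw [← hsum, huv] at this
    exact this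
  one_mem' := by
    intro d hd
    rw [coeff_one] at hd
    by_cases h : (0 : Fin 3 →₀ ℕ) = d
    · subst h; simp
    · simp [h] at hd
  add_mem' := by
    intro p q hp hq d hd
    rw [coeff_add] at hd
    by_cases h : coeff d p ≠ 0
    · exact hp d h
    · push_neg at h
      rw [h, zero_add] at hd
      exact hq d hd
  zero_mem' := by
    intro d hd
    simp at hd
  algebraMap_mem' := by
    intro r d hd
    rw [algebraMap_eq, coeff_C] at hd
    by_cases h : (0 : Fin 3 →₀ ℕ) = d
    · subst h; simp
    · simp [h] at hd

/-- The derivation `z⁴·∂/∂x` of `ℂ[x,y,z]`. -/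
noncomputable def veroneseDer : Derivation ℂ (MvPolynomial (Fin 3) ℂ) (MvPolynomial (Fin 3) ℂ) :=
  ((X 2 : MvPolynomial (Fin 3) ℂ) ^ 4) •
    (pderiv 0 : Derivation ℂ (MvPolynomial (Fin 3) ℂ) (MvPolynomial (Fin 3) ℂ))

lemma coeff_pderiv' {σ : Type*} [DecidableEq σ] (i : σ) (p : MvPolynomial σ ℂ) (d : σ →₀ ℕ) :
    coeff d (pderiv i p) = (d i + 1 : ℕ) * coeff (d + Finsupp.single i 1) p := by
  induction p using MvPolynomial.induction_on' with
  | monomial s a =>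
    rw [pderiv_monomial, coeff_monomial, coeff_monomial]
    by_cases h : s = d + Finsupp.single i 1
    · have hsi : s i = d i + 1 := by simp [h]
      have hsub : s - Finsupp.single i 1 = d := by
        rw [h]; ext j; by_cases hj : j = i <;> simp [hj]
      rw [if_pos hsub, if_pos h, hsi]
      push_cast
      ring
    · rw [if_neg h, mul_zero]
      by_cases h2 : s - Finsupp.single i 1 = d
      · rw [if_pos h2]
        by_cases hsi : s i = 0
        · simp [hsi]
        · exact absurd (by
            ext j
            by_cases hj : j = i
            · subst hj
              have hd : d j = s j - 1 := by rw [← h2]; simp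
              simp only [Finsupp.add_apply, Finsupp.single_eq_same]
              omega
            · have hd : d j = s j := by
                rw [← h2]; simp [Finsupp.single_apply, Ne.symm hj]
              simp [Finsupp.single_apply, Ne.symm hj, hd]) h
      · rw [if_neg h2]
  | add p q hp hq => simp [hp, hq, mul_add]

lemma veroneseDer_apply (p : MvPolynomial (Fin 3) ℂ) :
    veroneseDer p = X 2 ^ 4 * pderiv 0 p := rfl

lemma pderiv_iter_zero : ∀ (n : ℕ) (p : MvPolynomial (Fin 3) ℂ), totalDegree p < n →
    (⇑(pderiv (R := ℂ) (0 : Fin 3)))^[n] p = 0 := by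
  intro n
  induction n with
  | zero => intro p hp; exact absurd hp (Nat.not_lt_zero _)
  | succ n ih =>
    intro p hp
    rw [Function.iterate_succ_apply]
    by_cases h : pderiv (R := ℂ) (0 : Fin 3) p = 0
    · rw [h]; exact Function.iterate_fixed (map_zero _) n
    · apply ih
      have hsup : ∀ d ∈ (pderiv (R := ℂ) (0 : Fin 3) p).support,
          (d.sum fun _ e => e) < n := by
        intro d hd
        rw [mem_support_iff, coeff_pderiv'] at hd
        have hc : coeff (d + Finsupp.single 0 1) p ≠ 0 := right_ne_zero_of_mul hd
        have hmem : (d + Finsupp.single 0 1) ∈ p.support := mem_support_iff.mpr hc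
        have hle := le_totalDegree hmem
        have hsum : ((d + Finsupp.single 0 1).sum fun _ e => e)
            = (d.sum fun _ e => e) + 1 := by
          rw [Finsupp.sum_add_index' (fun _ => rfl) (fun _ _ _ => rfl)]
          simp
        rw [hsum] at hle
        omega
      obtain ⟨d0, hd0⟩ := support_nonempty.mpr h
      have hn : 0 < n := lt_of_le_of_lt (Nat.zero_le _) (hsup d0 hd0)
      rw [totalDegree]
      exact Finset.sup_lt_iff hn |>.mpr hsup

lemma veroneseDer_iterate (n : ℕ) (a : MvPolynomial (Fin 3) ℂ) :
    (⇑veroneseDer)^[n] a = (X 2 ^ 4 : MvPolynomial (Fin 3) ℂ) ^ n *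
      (⇑(pderiv (R := ℂ) (0 : Fin 3)))^[n] a := by
  induction n with
  | zero => simp
  | succ n ih =>
    rw [Function.iterate_succ_apply', Function.iterate_succ_apply', ih,
      veroneseDer_apply, pderiv_mul]
    have : pderiv (R := ℂ) (0 : Fin 3) ((X 2 ^ 4 : MvPolynomial (Fin 3) ℂ) ^ n) = 0 := by
      rw [pderiv_pow, pderiv_pow, pderiv_X_of_ne (by decide)]
      ring
    rw [this]
    ring

lemma veroneseDer_locally_nilpotent (a : MvPolynomial (Fin 3) ℂ) :
    ∃ n : ℕ, (⇑veroneseDer)^[n] a = 0 := by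
  refine ⟨totalDegree a + 1, ?_⟩
  rw [veroneseDer_iterate, pderiv_iter_zero _ a (Nat.lt_succ_self _), mul_zero]

lemma veroneseDer_mem (p : MvPolynomial (Fin 3) ℂ) (hp : p ∈ veronese3) :
    veroneseDer p ∈ veronese3 := by
  have key : ∀ s : Fin 3 →₀ ℕ, ∀ a : ℂ, (3 ∣ s.sum fun _ e => e) →
      veroneseDer (monomial s a) ∈ veronese3 := by
    intro s a hs
    rw [veroneseDer_apply, pderiv_monomial]
    by_cases h0 : s 0 = 0
    · rw [h0]
      simp only [Nat.cast_zero, mul_zero, map_zero, mul_zero]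
      exact zero_mem _
    · have hle : Finsupp.single (0 : Fin 3) 1 ≤ s := by
        rw [Finsupp.single_le_iff]; omega
      rw [X_pow_eq_monomial, monomial_mul]
      intro d hd
      rw [coeff_monomial] at hd
      by_cases hh : Finsupp.single (2 : Fin 3) 4 + (s - Finsupp.single 0 1) = d
      · subst hh
        have hsum1 : ((s - Finsupp.single (0 : Fin 3) 1).sum fun _ e => e) + 1
            = s.sum fun _ e => e := by
          have : (s - Finsupp.single (0 : Fin 3) 1) + Finsupp.single 0 1 = s :=
            tsub_add_cancel_of_le hle
          conv_rhs => rw [← this]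
          rw [Finsupp.sum_add_index' (fun _ => rfl) (fun _ _ _ => rfl)]
          simp
        have hsum2 : ((Finsupp.single (2 : Fin 3) 4 + (s - Finsupp.single 0 1)).sum
            fun _ e => e) = 4 + ((s - Finsupp.single (0 : Fin 3) 1).sum fun _ e => e) := by
          rw [Finsupp.sum_add_index' (fun _ => rfl) (fun _ _ _ => rfl)]
          simp
        rw [hsum2]
        omega
      · exact absurd rfl (by rwa [if_neg hh] at hd)
  rw [as_sum p, map_sum]
  exact Subalgebra.sum_mem _ fun d hd => key d _ (hp d (mem_support_iff.mp hd))

set_option synthInstance.maxHeartbeats 1000000 in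
set_option maxHeartbeats 1000000 in
noncomputable def veroneseDerRes : Derivation ℂ ↥veronese3 ↥veronese3 where
  toFun a := ⟨veroneseDer a, veroneseDer_mem a a.2⟩
  map_add' a b := Subtype.ext (by simp)
  map_smul' c a := Subtype.ext (by simp)
  map_one_eq_zero' := Subtype.ext (by simp)
  leibniz' a b := Subtype.ext (by
    push_cast
    simp [veroneseDer.leibniz, smul_eq_mul, mul_comm])

set_option synthInstance.maxHeartbeats 1000000 in
set_option maxHeartbeats 1000000 in
/-- case `d = 9` of Theorem 0.1. Let `A = ⊕_{k≥0} ℂ[x,y,z]_{3k}` be the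
third Veronese subalgebra of `ℂ[x,y,z]`. Then `A` admits a nonzero locally nilpotent
ℂ-derivation: the derivation `z⁴·∂/∂x` of `ℂ[x,y,z]` is locally nilpotent, maps `A` into
itself, and restricts to a nonzero locally nilpotent derivation of `A`. -/
theorem veronese3_admits_nonzero_locally_nilpotent_derivation :
    (∀ a : MvPolynomial (Fin 3) ℂ, ∃ n : ℕ, (⇑veroneseDer)^[n] a = 0) ∧
    (∀ p ∈ veronese3, veroneseDer p ∈ veronese3) ∧
    ∃ D : Derivation ℂ ↥veronese3 ↥veronese3,
      (∀ p : ↥veronese3, (D p : MvPolynomial (Fin 3) ℂ) = veroneseDer (p : MvPolynomial (Fin 3) ℂ)) ∧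
      D ≠ 0 ∧
      ∀ a : ↥veronese3, ∃ n : ℕ, (⇑D)^[n] a = 0 := by
  refine ⟨veroneseDer_locally_nilpotent, veroneseDer_mem, veroneseDerRes, fun p => rfl, ?_, ?_⟩
  · intro h
    have hmem : (X 0 : MvPolynomial (Fin 3) ℂ) ^ 3 ∈ veronese3 := by
      intro d hd
      rw [coeff_X_pow] at hd
      split_ifs at hd with hh
      · subst hh; simp
      · exact absurd rfl hd
    have h0 : veroneseDer ((X 0 : MvPolynomial (Fin 3) ℂ) ^ 3) = 0 := by
      have h1 : veroneseDerRes ⟨(X 0 : MvPolynomial (Fin 3) ℂ) ^ 3, hmem⟩ = 0 := by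
        rw [h]; rfl
      exact congrArg Subtype.val h1
    rw [veroneseDer_apply, pderiv_pow, pderiv_X_self] at h0
    have hne : (X 2 : MvPolynomial (Fin 3) ℂ) ^ 4 *
        (((3 : ℕ) : MvPolynomial (Fin 3) ℂ) * X 0 ^ (3 - 1) * 1) ≠ 0 := by
      apply mul_ne_zero (pow_ne_zero _ (X_ne_zero _))
      rw [mul_one]
      exact mul_ne_zero (by norm_num) (pow_ne_zero _ (X_ne_zero _))
    exact hne h0
  · intro a
    obtain ⟨n, hn⟩ := veroneseDer_locally_nilpotent (a : MvPolynomial (Fin 3) ℂ)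
    refine ⟨n, Subtype.ext ?_⟩
    have key : ∀ m (b : ↥veronese3),
        (((⇑veroneseDerRes)^[m] b : ↥veronese3) : MvPolynomial (Fin 3) ℂ)
          = (⇑veroneseDer)^[m] (b : MvPolynomial (Fin 3) ℂ) := by
      intro m
      induction m with
      | zero => intro b; rfl
      | succ m ih =>
        intro b
        rw [Function.iterate_succ_apply, Function.iterate_succ_apply, ih]
        rfl
    rw [key n a, hn]
    rfl
end

section
/- Let a, b be integers with a ≥ 1 and a + 2b ≥ 0, let n ≥ 1, and let m₁,…,m_n be nonnegative integers with m_i ≤ a for all i. If Σ_{i=1}^n m_i² = 3a² + 4ab − 1 and Σ_{i=1}^n m_i = 3a + 2b − 3, then max_i m_i > a + b. -/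
open Finset

/-- arithmetic content of Claim 3, the Noether–Fano inequality, in the
proof of Theorem 4.21. Let `a, b` be integers with `a ≥ 1` and `a + 2b ≥ 0`, let `n ≥ 1`,
and let `m₁,…,m_n` be nonnegative integers with `m_i ≤ a` for all `i`. If
`Σ m_i² = 3a² + 4ab − 1` and `Σ m_i = 3a + 2b − 3`, then `max_i m_i > a + b`. -/
theorem claim3_noether_fano (a b : ℤ) (ha : 1 ≤ a) (hab : 0 ≤ a + 2 * b)
    (n : ℕ) (hn : 1 ≤ n)
    (m : Fin n → ℤ) (hm0 : ∀ i, 0 ≤ m i) (hma : ∀ i, m i ≤ a)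
    (h1 : ∑ i, (m i) ^ 2 = 3 * a ^ 2 + 4 * a * b - 1)
    (h2 : ∑ i, m i = 3 * a + 2 * b - 3) :
    ∃ i, a + b < m i := by
  by_contra hc
  push_neg at hc
  rcases le_or_gt 0 b with hb | hb
  · -- b ≥ 0 : use m i ≤ a
    have hsum : ∑ i, (m i) ^ 2 ≤ ∑ i, a * m i := by
      apply Finset.sum_le_sum
      intro i _
      nlinarith [hm0 i, hma i]
    rw [← Finset.mul_sum, h2] at hsum
    nlinarith [hsum, h1]
  · -- b ≤ -1 : use m i ≤ a + b
    have hab0 : 0 ≤ a + b := le_trans (hm0 ⟨0, hn⟩) (hc ⟨0, hn⟩)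
    have hab1 : 1 ≤ a + b := by
      rcases eq_or_lt_of_le hab0 with h | h
      · exfalso; omega
      · omega
    have hsum : ∑ i, (m i) ^ 2 ≤ ∑ i, (a + b) * m i := by
      apply Finset.sum_le_sum
      intro i _
      nlinarith [hm0 i, hc i]
    rw [← Finset.mul_sum, h2] at hsum
    nlinarith [hsum, h1, mul_nonpos_of_nonpos_of_nonneg (le_of_lt hb) hab]
end
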